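/- arXiv:math/0004024 — 11 statements merged into one kernel-verified Lean document; each statement's English description precedes it below -/
import Mathlib

section
/- There is no countable transitive family of continuous self-maps of the Cantor set; that is, for every countable family F of continuous functions from 2^ω to 2^ω there exist points x, y in 2^ω such that f(x) ≠ y and f(y) ≠ x for every f in F. -/
open Set Topology

/-- In the Cantor space, every nonempty open set contains a point different
from any given point. -/
lemma cantor_open_two_points {U : Set (ℕ → Bool)} (hU : IsOpen U)
    (hne : U.Nonempty) (w : ℕ → Bool) : ∃ z ∈ U, z ≠ w := by
  obtain ⟨x, hx⟩ := hne
  by_cases hxw : x = w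
  · subst hxw
    obtain ⟨I, u, hu, hsub⟩ := isOpen_pi_iff.mp hU x hx
    set N : ℕ := I.sup id + 1 with hN
    have hNI : N ∉ I := by
      intro h
      have h2 : id N ≤ I.sup id := Finset.le_sup h
      simp only [hN, id] at h2
      omega
    refine ⟨Function.update x N (!x N), ?_, ?_⟩
    · apply hsub
      intro i hi
      rw [Function.update_of_ne (by rintro rfl; exact hNI hi)]
      exact (hu i hi).2
    · intro h
      have := congrFun h N
      simp [Function.update_self] at this
  · exact ⟨x, hx, hxw⟩

lemma graph_nowhere_dense₁ {f : (ℕ → Bool) → (ℕ → Bool)} (hf : Continuous f) :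
    IsNowhereDense {p : (ℕ → Bool) × (ℕ → Bool) | f p.1 = p.2} := by
  have hcl : IsClosed {p : (ℕ → Bool) × (ℕ → Bool) | f p.1 = p.2} :=
    isClosed_eq (hf.comp continuous_fst) continuous_snd
  rw [hcl.isNowhereDense_iff]
  rw [eq_empty_iff_forall_notMem]
  rintro ⟨x, y⟩ hp
  obtain ⟨U, V, hUo, hVo, hxU, hyV, hUV⟩ := isOpen_prod_iff.mp isOpen_interior _ _ hp
  obtain ⟨z, hz, hzne⟩ := cantor_open_two_points hVo ⟨y, hyV⟩ (f x)
  have hm : (x, z) ∈ {p : (ℕ → Bool) × (ℕ → Bool) | f p.1 = p.2} :=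
    interior_subset (hUV (mk_mem_prod hxU hz))
  exact hzne hm.symm

lemma graph_nowhere_dense₂ {f : (ℕ → Bool) → (ℕ → Bool)} (hf : Continuous f) :
    IsNowhereDense {p : (ℕ → Bool) × (ℕ → Bool) | f p.2 = p.1} := by
  have hcl : IsClosed {p : (ℕ → Bool) × (ℕ → Bool) | f p.2 = p.1} :=
    isClosed_eq (hf.comp continuous_snd) continuous_fst
  rw [hcl.isNowhereDense_iff]
  rw [eq_empty_iff_forall_notMem]
  rintro ⟨x, y⟩ hp
  obtain ⟨U, V, hUo, hVo, hxU, hyV, hUV⟩ := isOpen_prod_iff.mp isOpen_interior _ _ hp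
  obtain ⟨z, hz, hzne⟩ := cantor_open_two_points hUo ⟨x, hxU⟩ (f y)
  have hm : (z, y) ∈ {p : (ℕ → Bool) × (ℕ → Bool) | f p.2 = p.1} :=
    interior_subset (hUV (mk_mem_prod hz hyV))
  exact hzne hm.symm

/-- There is no countable transitive family of continuous self-maps of the
Cantor set `2^ω = ℕ → Bool`. -/
theorem no_countable_transitive_family
    (F : Set ((ℕ → Bool) → (ℕ → Bool))) (hcount : F.Countable)
    (hcont : ∀ f ∈ F, Continuous f) :
    ∃ x y : ℕ → Bool, ∀ f ∈ F, f x ≠ y ∧ f y ≠ x := by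
  set s : Set ((ℕ → Bool) × (ℕ → Bool)) :=
    ⋃ f ∈ F, ({p | f p.1 = p.2} ∪ {p | f p.2 = p.1}) with hs
  have hmeagre : IsMeagre s := by
    rw [isMeagre_iff_countable_union_isNowhereDense]
    refine ⟨((fun f => {p : (ℕ → Bool) × (ℕ → Bool) | f p.1 = p.2}) '' F) ∪
        ((fun f => {p : (ℕ → Bool) × (ℕ → Bool) | f p.2 = p.1}) '' F), ?_, ?_, ?_⟩
    · rintro t (⟨f, hf, rfl⟩ | ⟨f, hf, rfl⟩)
      · exact graph_nowhere_dense₁ (hcont f hf)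
      · exact graph_nowhere_dense₂ (hcont f hf)
    · exact (hcount.image _).union (hcount.image _)
    · rintro p hp
      simp only [hs, mem_iUnion, mem_union] at hp
      obtain ⟨f, hf, h | h⟩ := hp
      · exact ⟨_, Or.inl ⟨f, hf, rfl⟩, h⟩
      · exact ⟨_, Or.inr ⟨f, hf, rfl⟩, h⟩
  have hdense : Dense sᶜ := dense_of_mem_residual hmeagre
  obtain ⟨⟨x, y⟩, hp⟩ := hdense.nonempty
  refine ⟨x, y, fun f hf => ?_⟩
  simp only [hs, mem_compl_iff, mem_iUnion, mem_union, not_exists, not_or] at hp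
  exact ⟨(hp f hf).1, (hp f hf).2⟩
end

section
/- (Hajnal's free set lemma, successor case used in the paper) Let S be a set of cardinality κ, let λ be an infinite cardinal with λ⁺ < κ, and let F : S → 𝒫(S) be a set mapping such that |F(x)| ≤ λ for every x ∈ S. Then there is a subset S' ⊆ S with |S'| = κ such that for all x, y ∈ S' with x ≠ y, y ∉ F(x). -/
open Cardinal
open Set

namespace HajnalAux

universe u

variable {S : Type u}

/-- Freeness of a set w.r.t. a set mapping. -/
def Free (F : S → Set S) (A : Set S) : Prop := ∀ x ∈ A, ∀ y ∈ A, x ≠ y → y ∉ F x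

theorem Free.mono {F : S → Set S} {A B : Set S} (hAB : A ⊆ B) (hB : Free F B) : Free F A :=
  fun x hx y hy hxy => hB x (hAB hx) y (hAB hy) hxy

theorem free_empty (F : S → Set S) : Free F (∅ : Set S) := fun x hx => absurd hx (notMem_empty x)

/-- image of a set under a set mapping -/
def img (F : S → Set S) (A : Set S) : Set S := ⋃ x : A, F x

/-- preimage-hitters of a set -/
def pre (F : S → Set S) (A : Set S) : Set S := {y | (F y ∩ A).Nonempty}

/-- everything to avoid after choosing a piece -/
def junk (F : S → Set S) (A : Set S) : Set S := (A ∪ img F A) ∪ pre F A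

theorem mem_img {F : S → Set S} {A : Set S} {y : S} : y ∈ img F A ↔ ∃ x ∈ A, y ∈ F x := by
  simp [img]

theorem mk_img_le {F : S → Set S} {lam : Cardinal.{u}} (hF : ∀ x, #(F x) ≤ lam) (A : Set S) :
    #(img F A) ≤ #A * lam := by
  calc #(img F A) ≤ Cardinal.sum (fun x : A => #(F (x : S))) := mk_iUnion_le_sum_mk
  _ ≤ Cardinal.sum (fun _ : A => lam) := Cardinal.sum_le_sum _ _ (fun x => hF x)
  _ = #A * lam := Cardinal.sum_const' _ _

theorem mk_small_junk_le {F : S → Set S} {lam : Cardinal.{u}} (hF : ∀ x, #(F x) ≤ lam)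
    (A : Set S) : #(A ∪ img F A : Set S) ≤ #A + #A * lam :=
  (mk_union_le _ _).trans (by gcongr; exact mk_img_le hF A)

/-- a maximal free subset of any set exists (Zorn). -/
theorem exists_maximal_free (F : S → Set S) (T : Set S) :
    ∃ A, (A ⊆ T ∧ Free F A) ∧ ∀ B, B ⊆ T → Free F B → A ⊆ B → B = A := by
  have hch : ∀ c ⊆ {A : Set S | A ⊆ T ∧ Free F A}, IsChain (· ⊆ ·) c →
      ∃ ub ∈ {A : Set S | A ⊆ T ∧ Free F A}, ∀ s ∈ c, s ⊆ ub := by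
    intro c hcS hchain
    refine ⟨⋃₀ c, ⟨sUnion_subset fun s hs => (hcS hs).1, ?_⟩, fun s hs => subset_sUnion_of_mem hs⟩
    intro x hx y hy hxy
    obtain ⟨sx, hsx, hxsx⟩ := hx
    obtain ⟨sy, hsy, hysy⟩ := hy
    rcases hchain.total hsx hsy with h | h
    · exact (hcS hsy).2 x (h hxsx) y hysy hxy
    · exact (hcS hsx).2 x hxsx y (h hysy) hxy
  obtain ⟨m, hm⟩ := zorn_subset {A : Set S | A ⊆ T ∧ Free F A} hch
  exact ⟨m, hm.prop, fun B hBT hBF hmB => ((hm.le_of_ge ⟨hBT, hBF⟩ hmB).antisymm hmB)⟩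

section Tower

variable (F : S → Set S) {lam : Cardinal.{u}} (hlam : ℵ₀ ≤ lam) (hF : ∀ x, #(F x) ≤ lam)

include hF

/-- The tower of maximal free sets: produces a `λ⁺`-indexed family of free subsets of `T`,
pairwise separated, which together with their images covers `T`. -/
theorem tower_core (T : Set S) :
    ∃ A : (Order.succ lam).ord.ToType → Set S,
      (∀ i, A i ⊆ T) ∧ (∀ i, Free F (A i)) ∧
      (∀ i j, i < j → ∀ x ∈ A j, x ∉ A i ∧ x ∉ img F (A i)) ∧
      T ⊆ ⋃ i, (A i ∪ img F (A i)) := by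
  classical
  set ι := (Order.succ lam).ord.ToType with hιdef
  let step : (i : ι) → ((j : ι) → j < i → Set S) → Set S := fun i rec =>
    Classical.choose (exists_maximal_free F
      (T \ ⋃ j : {j : ι // j < i}, (rec j.1 j.2 ∪ img F (rec j.1 j.2))))
  let A : ι → Set S := IsWellFounded.fix (· < ·) step
  let pool : ι → Set S := fun i => T \ ⋃ j : {j : ι // j < i}, (A j.1 ∪ img F (A j.1))
  have hfix : ∀ i, A i = Classical.choose (exists_maximal_free F (pool i)) := by
    intro i
    exact IsWellFounded.fix_eq (· < ·) step i
  have hspec : ∀ i, (A i ⊆ pool i ∧ Free F (A i)) ∧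
      ∀ B, B ⊆ pool i → Free F B → A i ⊆ B → B = A i := by
    intro i
    rw [hfix i]
    exact Classical.choose_spec (exists_maximal_free F (pool i))
  have hsubT : ∀ i, A i ⊆ T := fun i => ((hspec i).1.1).trans diff_subset
  have hsep : ∀ i j, i < j → ∀ x ∈ A j, x ∉ A i ∧ x ∉ img F (A i) := by
    intro i j hij x hx
    have hxpool := (hspec j).1.1 hx
    have : x ∉ ⋃ k : {k : ι // k < j}, (A k.1 ∪ img F (A k.1)) := hxpool.2
    constructor
    · intro hxi
      exact this (mem_iUnion.mpr ⟨⟨i, hij⟩, Or.inl hxi⟩)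
    · intro hxi
      exact this (mem_iUnion.mpr ⟨⟨i, hij⟩, Or.inr hxi⟩)
  refine ⟨A, hsubT, fun i => (hspec i).1.2, hsep, ?_⟩
  -- exhaustion
  by_contra hcov
  rw [not_subset] at hcov
  obtain ⟨y, hyT, hyout⟩ := hcov
  have hypool : ∀ i, y ∈ pool i := by
    intro i
    refine ⟨hyT, ?_⟩
    intro hmem
    obtain ⟨j, hj⟩ := mem_iUnion.mp hmem
    exact hyout (mem_iUnion.mpr ⟨j.1, hj⟩)
  have hynotA : ∀ i, y ∉ A i := fun i hyA => hyout (mem_iUnion.mpr ⟨i, Or.inl hyA⟩)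
  have hynotimg : ∀ i, y ∉ img F (A i) := fun i hyA => hyout (mem_iUnion.mpr ⟨i, Or.inr hyA⟩)
  -- for each i, get a witness in F y ∩ A i
  have hwit : ∀ i : ι, ∃ w, w ∈ F y ∧ w ∈ A i := by
    intro i
    have hnotfree : ¬ Free F (insert y (A i)) := by
      intro hfree
      have : insert y (A i) = A i := by
        refine (hspec i).2 (insert y (A i)) ?_ hfree (subset_insert _ _)
        exact insert_subset (hypool i) (hspec i).1.1
      exact hynotA i (this ▸ mem_insert y (A i))
    rw [Free] at hnotfree
    push_neg at hnotfree
    obtain ⟨a, ha, b, hb, hab, hbFa⟩ := hnotfree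
    rcases ha with rfl | haA
    · rcases hb with rfl | hbA
      · exact absurd rfl hab
      · exact ⟨b, hbFa, hbA⟩
    · rcases hb with rfl | hbA
      · exact absurd (mem_img.mpr ⟨a, haA, hbFa⟩) (hynotimg i)
      · exact absurd hbFa ((hspec i).1.2 a haA b hbA hab)
  choose w hwF hwA using hwit
  have hinj : Function.Injective (fun i : ι => (⟨w i, hwF i⟩ : (F y : Set S))) := by
    intro i j hij
    by_contra hne
    simp only [Subtype.mk.injEq] at hij
    rcases lt_trichotomy i j with h | h | h
    · exact (hsep i j h (w j) (hwA j)).1 (hij ▸ hwA i)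
    · exact hne h
    · exact (hsep j i h (w i) (hwA i)).1 (hij ▸ hwA j)
  have hcard : #ι ≤ #(F y) := Cardinal.mk_le_of_injective hinj
  rw [hιdef, Cardinal.mk_ord_toType] at hcard
  exact (Order.lt_succ lam).not_ge (hcard.trans (hF y))

include hlam

/-- Lemma A: any set of size `> ρ ≥ λ⁺` has a free subset of size exactly `ρ`. -/
theorem exists_free_card (T : Set S) (ρ : Cardinal.{u})
    (hr1 : Order.succ lam ≤ ρ) (hr2 : ρ < #T) :
    ∃ A, A ⊆ T ∧ Free F A ∧ #A = ρ := by
  obtain ⟨A, hsub, hfree, _, hcover⟩ := tower_core F hF T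
  by_cases h : ∃ i, ρ ≤ #(A i)
  · obtain ⟨i, hi⟩ := h
    obtain ⟨B, hBA, hBcard⟩ := Cardinal.le_mk_iff_exists_subset.mp hi
    exact ⟨B, hBA.trans (hsub i), (hfree i).mono hBA, hBcard⟩
  · push_neg at h
    exfalso
    have hrinf : ℵ₀ ≤ ρ := hlam.trans ((Order.le_succ lam).trans hr1)
    have hlamr : lam < ρ := lt_of_lt_of_le (Order.lt_succ lam) hr1
    have hbound : ∀ i, #(A i ∪ img F (A i) : Set S) < ρ := by
      intro i
      calc #(A i ∪ img F (A i) : Set S) ≤ #(A i) + #(A i) * lam := mk_small_junk_le hF (A i)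
      _ < ρ := Cardinal.add_lt_of_lt hrinf (h i) (Cardinal.mul_lt_of_lt hrinf (h i) hlamr)
    haveI : Nonempty ((Order.succ lam).ord.ToType) := by
      rw [Ordinal.toType_nonempty_iff_ne_zero]
      simp only [ne_eq, Cardinal.ord_eq_zero]
      exact fun hz => (Cardinal.succ_ne_zero lam) hz
    have hT : #T ≤ Order.succ lam * ρ := by
      calc #T ≤ #(⋃ i, (A i ∪ img F (A i))) := Cardinal.mk_le_mk_of_subset hcover
      _ ≤ #((Order.succ lam).ord.ToType) * ⨆ i, #(A i ∪ img F (A i) : Set S) :=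
          Cardinal.mk_iUnion_le _
      _ ≤ Order.succ lam * ρ := by
          rw [Cardinal.mk_ord_toType]
          exact mul_le_mul_right (ciSup_le' fun i => (hbound i).le) _
    rw [Cardinal.mul_eq_max (hlam.trans (Order.le_succ lam)) hrinf, max_eq_right hr1] at hT
    exact hr2.not_ge hT

/-- Case 1 of Hajnal's theorem: `cf κ > λ⁺`. -/
theorem case_big_cof (hbig : Order.succ lam < #S) (hcof : Order.succ lam < (#S).ord.cof) :
    ∃ A : Set S, #A = #S ∧ Free F A := by
  by_contra hno
  push_neg at hno
  have hSinf : ℵ₀ ≤ #S := hlam.trans ((Order.le_succ lam).trans hbig.le)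
  have hfree_lt : ∀ A : Set S, Free F A → #A < #S := by
    intro A hA
    rcases lt_or_eq_of_le (le_trans (Cardinal.mk_le_mk_of_subset (subset_univ A)) (le_of_eq Cardinal.mk_univ)) with h | h
    · exact h
    · exact absurd hA (hno A h)
  obtain ⟨A, hsub, hfree, _, hcover⟩ := tower_core F hF (univ : Set S)
  have hbound : ∀ i, #(A i ∪ img F (A i) : Set S) < #S := by
    intro i
    calc #(A i ∪ img F (A i) : Set S) ≤ #(A i) + #(A i) * lam := mk_small_junk_le hF (A i)
    _ < #S := Cardinal.add_lt_of_lt hSinf (hfree_lt _ (hfree i))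
        (Cardinal.mul_lt_of_lt hSinf (hfree_lt _ (hfree i)) (lt_trans (Order.lt_succ lam) hbig))
  have hsup : (⨆ i, #(A i ∪ img F (A i) : Set S)) < #S := by
    refine Ordinal.iSup_lt ?_ hbound
    rw [Cardinal.mk_ord_toType]
    exact hcof
  have : #S ≤ Order.succ lam * ⨆ i, #(A i ∪ img F (A i) : Set S) := by
    calc #S = #(univ : Set S) := Cardinal.mk_univ.symm
    _ ≤ #(⋃ i, (A i ∪ img F (A i))) := Cardinal.mk_le_mk_of_subset hcover
    _ ≤ #((Order.succ lam).ord.ToType) * ⨆ i, #(A i ∪ img F (A i) : Set S) :=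
        Cardinal.mk_iUnion_le _
    _ = Order.succ lam * ⨆ i, #(A i ∪ img F (A i) : Set S) := by rw [Cardinal.mk_ord_toType]
  exact absurd this (not_le.mpr (Cardinal.mul_lt_of_lt hSinf hbig hsup))

end Tower

section Chains

variable {α β : Type u} [LinearOrder α] [LinearOrder β] [WellFoundedLT α] [WellFoundedLT β]

/-- choose a free subset of `pool` of size `c` if one exists, else `∅`. -/
theorem exists_good (F : S → Set S) (pool : Set S) (c : Cardinal.{u}) :
    ∃ B : Set S, (B ⊆ pool ∧ Free F B ∧ #B = c) ∨
      (B = ∅ ∧ ¬∃ B' : Set S, B' ⊆ pool ∧ Free F B' ∧ #B' = c) := by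
  by_cases h : ∃ B' : Set S, B' ⊆ pool ∧ Free F B' ∧ #B' = c
  · obtain ⟨B, hB⟩ := h
    exact ⟨B, Or.inl hB⟩
  · exact ⟨∅, Or.inr ⟨rfl, h⟩⟩

/-- the synchronized system of chains: at lex-stage `(ξ, ν)` (stage `ξ`, chain `ν`), pick a
free set of size `M ξ` inside the chain's own viable region, avoiding all previous pieces. -/
noncomputable def chains (F : S → Set S) (M : α → Cardinal.{u}) : α × β → Set S :=
  IsWellFounded.fix (Prod.Lex ((· < ·) : α → α → Prop) ((· < ·) : β → β → Prop)) (fun p rec =>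
    Classical.choose (exists_good F
      ((univ \ (⋃ (η : {η : α // η < p.1}), junk F (rec (η.1, p.2) (Prod.Lex.left _ _ η.2)))) \
        (⋃ (q : {q : α × β // Prod.Lex (· < ·) (· < ·) q p}), rec q.1 q.2))
      (M p.1)))

/-- the viable region of chain `p.2` at stage `p.1`. -/
def chV (F : S → Set S) (M : α → Cardinal.{u}) (p : α × β) : Set S :=
  univ \ (⋃ (η : {η : α // η < p.1}), junk F (chains F M (η.1, p.2)))

/-- the pool from which the piece at lex-stage `p` is drawn. -/
def chPool (F : S → Set S) (M : α → Cardinal.{u}) (p : α × β) : Set S :=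
  chV F M p \ (⋃ (q : {q : α × β // Prod.Lex (· < ·) (· < ·) q p}), chains F M q.1)

theorem chains_eq (F : S → Set S) (M : α → Cardinal.{u}) (p : α × β) :
    chains F M p = Classical.choose (exists_good F (chPool F M p) (M p.1)) := by
  rw [chains, IsWellFounded.fix_eq]
  rfl

theorem chains_spec' (F : S → Set S) (M : α → Cardinal.{u}) (p : α × β) :
    (chains F M p ⊆ chPool F M p ∧ Free F (chains F M p) ∧ #(chains F M p) = M p.1) ∨
      (chains F M p = ∅ ∧
        ¬∃ B' : Set S, B' ⊆ chPool F M p ∧ Free F B' ∧ #B' = M p.1) := by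
  rw [chains_eq]
  exact Classical.choose_spec (exists_good F (chPool F M p) (M p.1))

theorem chains_spec {F : S → Set S} {M : α → Cardinal.{u}} {p : α × β}
    (h : ∃ B : Set S, B ⊆ chPool F M p ∧ Free F B ∧ #B = M p.1) :
    chains F M p ⊆ chPool F M p ∧ Free F (chains F M p) ∧ #(chains F M p) = M p.1 := by
  rcases chains_spec' F M p with hs | hs
  · exact hs
  · exact absurd h hs.2

theorem chains_subset (F : S → Set S) (M : α → Cardinal.{u}) (p : α × β) :
    chains F M p ⊆ chPool F M p := by
  rcases chains_spec' F M p with hs | hs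
  · exact hs.1
  · rw [hs.1]; exact empty_subset _

theorem chains_free (F : S → Set S) (M : α → Cardinal.{u}) (p : α × β) :
    Free F (chains F M p) := by
  rcases chains_spec' F M p with hs | hs
  · exact hs.2.1
  · rw [hs.1]; exact free_empty F

theorem chains_card_le (F : S → Set S) (M : α → Cardinal.{u}) (p : α × β) :
    #(chains F M p) ≤ M p.1 := by
  rcases chains_spec' F M p with hs | hs
  · exact le_of_eq hs.2.2
  · rw [hs.1]; simp

theorem chains_disjoint (F : S → Set S) (M : α → Cardinal.{u}) {p q : α × β}
    (hqp : Prod.Lex (· < ·) (· < ·) q p) : ∀ x ∈ chains F M p, x ∉ chains F M q := by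
  intro x hx hxq
  exact (chains_subset F M p hx).2 (mem_iUnion.mpr ⟨⟨q, hqp⟩, hxq⟩)

theorem chains_disjoint' (F : S → Set S) (M : α → Cardinal.{u}) {p q : α × β}
    (hpq : p ≠ q) : ∀ x ∈ chains F M p, x ∉ chains F M q := by
  rcases trichotomous_of (Prod.Lex ((· < ·) : α → α → Prop) ((· < ·) : β → β → Prop)) p q
    with h | h | h
  · intro x hx hxq
    exact chains_disjoint F M h x hxq hx
  · exact absurd h hpq
  · exact chains_disjoint F M h

omit [WellFoundedLT α] [WellFoundedLT β] in
theorem lex_fst_le {p q : α × β} (h : Prod.Lex ((· < ·) : α → α → Prop) ((· < ·) : β → β → Prop) q p) :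
    q.1 ≤ p.1 := by
  rcases Prod.lex_iff.mp h with h1 | ⟨h1, _⟩
  · exact h1.le
  · exact h1.le

theorem chains_mass (F : S → Set S) {M : α → Cardinal.{u}} (hM : Monotone M) (p : α × β) :
    #(⋃ q : {q : α × β // Prod.Lex (· < ·) (· < ·) q p}, chains F M q.1) ≤ #(α × β) * M p.1 := by
  calc #(⋃ q : {q : α × β // Prod.Lex (· < ·) (· < ·) q p}, chains F M q.1)
      ≤ Cardinal.sum (fun q : {q : α × β // Prod.Lex (· < ·) (· < ·) q p} => #(chains F M q.1)) :=
        Cardinal.mk_iUnion_le_sum_mk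
  _ ≤ Cardinal.sum (fun _ : {q : α × β // Prod.Lex (· < ·) (· < ·) q p} => M p.1) :=
        Cardinal.sum_le_sum _ _ (fun q => (chains_card_le F M q.1).trans (hM (lex_fst_le q.2)))
  _ = #{q : α × β // Prod.Lex (· < ·) (· < ·) q p} * M p.1 := Cardinal.sum_const' _ _
  _ ≤ #(α × β) * M p.1 := mul_le_mul_left (Cardinal.mk_subtype_le _) _

end Chains

theorem mk_diff_big {T U : Set S} (hinf : ℵ₀ ≤ #S) (hT : #T = #S) (hU : #U < #S) :
    #(T \ U : Set S) = #S := by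
  have h1 : #(T \ U : Set S) ≤ #S :=
    (Cardinal.mk_le_mk_of_subset (subset_univ _)).trans_eq Cardinal.mk_univ
  refine le_antisymm h1 ?_
  by_contra hlt
  push_neg at hlt
  have hsub : T ⊆ (T \ U) ∪ U := by
    intro x hx
    by_cases hxU : x ∈ U
    · exact Or.inr hxU
    · exact Or.inl ⟨hx, hxU⟩
  have : #S ≤ #(T \ U : Set S) + #U := by
    calc #S = #T := hT.symm
    _ ≤ #((T \ U) ∪ U : Set S) := Cardinal.mk_le_mk_of_subset hsub
    _ ≤ #(T \ U : Set S) + #U := Cardinal.mk_union_le _ _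
  exact this.not_gt (Cardinal.add_lt_of_lt hinf hlt hU)

theorem exists_not_mem_of_small {U : Set S} (hU : #U < #S) : ∃ y, y ∉ U := by
  by_contra h
  push_neg at h
  have : (univ : Set S) ⊆ U := fun x _ => h x
  have := Cardinal.mk_le_mk_of_subset this
  rw [Cardinal.mk_univ] at this
  exact hU.not_ge this

/-- Case 2 of Hajnal's theorem: `cf κ ≤ λ⁺` (the singular case). -/
theorem case_small_cof (F : S → Set S) {lam : Cardinal.{u}} (hlam : ℵ₀ ≤ lam)
    (hF : ∀ x, #(F x) ≤ lam) (hbig : Order.succ lam < #S)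
    (hcof : (#S).ord.cof ≤ Order.succ lam) :
    ∃ A : Set S, #A = #S ∧ Free F A := by
  classical
  have hSinf : ℵ₀ ≤ #S := hlam.trans ((Order.le_succ lam).trans hbig.le)
  have hslaminf : ℵ₀ ≤ Order.succ lam := hlam.trans (Order.le_succ lam)
  set μ := Order.succ (Order.succ lam) with hμdef
  have hμinf : ℵ₀ ≤ μ := hslaminf.trans (Order.le_succ _)
  have hμκ : μ < #S := by
    rcases lt_or_eq_of_le (Order.succ_le_of_lt hbig) with h | h
    · exact h
    · exfalso
      have hreg := Cardinal.isRegular_succ hslaminf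
      have hc : (#S).ord.cof = μ := by rw [← h]; exact hreg.cof_eq
      rw [hc] at hcof
      exact (Order.lt_succ (Order.succ lam)).not_ge hcof
  have hsucc_lt : ∀ c : Cardinal.{u}, c < #S → Order.succ (max c (Order.succ lam)) < #S := by
    intro c hc
    have hd : max c (Order.succ lam) < #S := max_lt hc hbig
    rcases lt_or_eq_of_le (Order.succ_le_of_lt hd) with h | h
    · exact h
    · exfalso
      have hdinf : ℵ₀ ≤ max c (Order.succ lam) := hslaminf.trans (le_max_right _ _)
      have hreg := Cardinal.isRegular_succ hdinf
      have hc2 : (#S).ord.cof = Order.succ (max c (Order.succ lam)) := by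
        rw [← h]; exact hreg.cof_eq
      rw [hc2] at hcof
      exact ((le_max_right c _).trans_lt (Order.lt_succ _)).not_ge hcof
  set θ := (#S).ord.cof with hθdef
  have hθinf : ℵ₀ ≤ θ := Ordinal.aleph0_le_cof.mpr (Cardinal.isSuccLimit_ord hSinf)
  have hθκ : θ < #S := lt_of_le_of_lt hcof hbig
  -- a cofinal family of ordinals indexed by the stage type
  obtain ⟨ι₀, f₀, hlsub, hmk₀⟩ := Ordinal.exists_lsub_cof (#S).ord
  have hmkθ : #(θ.ord.ToType) = #ι₀ := by rw [Cardinal.mk_ord_toType, hmk₀]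
  obtain ⟨e⟩ := Cardinal.eq.mp hmkθ
  set G : θ.ord.ToType → Ordinal := fun η => f₀ (e η) with hGdef
  have hGlt : ∀ η, G η < (#S).ord := by
    intro η
    rw [hGdef, ← hlsub]
    exact Ordinal.lt_lsub f₀ (e η)
  have hGcof : ∀ a, a < (#S).ord → ∃ η, a ≤ G η := by
    intro a ha
    by_contra hno
    push_neg at hno
    have hall : ∀ i, f₀ i < a := by
      intro i
      simpa [hGdef] using hno (e.symm i)
    exact ha.not_ge (hlsub ▸ Ordinal.lsub_le hall)
  -- the stage sizes
  set M : θ.ord.ToType → Cardinal.{u} :=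
    fun ξ => max (Order.succ lam) (⨆ η : (Iic ξ : Set θ.ord.ToType), (G η.1).card) with hMdef
  have hM1 : ∀ ξ, Order.succ lam ≤ M ξ := fun ξ => le_max_left _ _
  have hMκ : ∀ ξ, M ξ < #S := by
    intro ξ
    refine max_lt hbig ?_
    refine Ordinal.iSup_lt ?_ (fun η => Cardinal.lt_ord.mp (hGlt η.1))
    rw [← hθdef]
    calc #(Iic ξ : Set _) = #(insert ξ (Iio ξ) : Set _) := by rw [Set.Iio_insert]
    _ ≤ #(Iio ξ : Set _) + 1 := Cardinal.mk_insert_le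
    _ < θ := Cardinal.add_lt_of_lt hθinf (Cardinal.mk_Iio_ord_toType ξ)
        (lt_of_lt_of_le Cardinal.one_lt_aleph0 hθinf)
  have hMmono : Monotone M := by
    intro ξ ξ' hle
    refine max_le_max le_rfl ?_
    haveI : Nonempty (Iic ξ : Set θ.ord.ToType) := ⟨⟨ξ, le_refl ξ⟩⟩
    refine ciSup_le' fun η => ?_
    exact le_ciSup (Cardinal.bddAbove_range _) (⟨η.1, le_trans η.2 hle⟩ : (Iic ξ' : Set _))
  have hMcof : ∀ c : Cardinal.{u}, c < #S → ∃ ξ, c ≤ M ξ := by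
    intro c hc
    have hc' : max c (Order.succ lam) < #S := max_lt hc hbig
    obtain ⟨η, hη⟩ := hGcof (max c (Order.succ lam)).ord (Cardinal.ord_lt_ord.mpr hc')
    refine ⟨η, ?_⟩
    have hcard : max c (Order.succ lam) ≤ (G η).card := by
      have := Ordinal.card_le_card hη
      rwa [Cardinal.card_ord] at this
    calc c ≤ max c (Order.succ lam) := le_max_left _ _
    _ ≤ (G η).card := hcard
    _ ≤ ⨆ η' : (Iic η : Set _), (G η'.1).card :=
        le_ciSup (Cardinal.bddAbove_range _) (⟨η, le_refl η⟩ : (Iic η : Set _))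
    _ ≤ M η := le_max_right _ _
  -- total mass bounds
  have hidx : #(θ.ord.ToType × μ.ord.ToType) < #S := by
    rw [Cardinal.mk_prod, Cardinal.lift_id, Cardinal.lift_id,
      Cardinal.mk_ord_toType, Cardinal.mk_ord_toType]
    exact Cardinal.mul_lt_of_lt hSinf hθκ hμκ
  have hmass : ∀ p : θ.ord.ToType × μ.ord.ToType,
      #(⋃ q : {q : θ.ord.ToType × μ.ord.ToType // Prod.Lex (· < ·) (· < ·) q p},
        chains F M q.1) < #S :=
    fun p => ((chains_mass F hMmono p).trans_lt
      (Cardinal.mul_lt_of_lt hSinf hidx (hMκ p.1)))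
  -- alive stages have full pools, hence pieces of full size
  have hguard : ∀ p : θ.ord.ToType × μ.ord.ToType, #(chV F M p) = #S →
      chains F M p ⊆ chPool F M p ∧ Free F (chains F M p) ∧ #(chains F M p) = M p.1 := by
    intro p hV
    have hpool : #(chPool F M p) = #S := mk_diff_big hSinf hV (hmass p)
    refine chains_spec ?_
    obtain ⟨B, hB1, hB2, hB3⟩ := exists_free_card F hlam hF (chPool F M p) (M p.1)
      (hM1 p.1) (by rw [hpool]; exact hMκ p.1)
    exact ⟨B, hB1, hB2, hB3⟩
  -- the dead chains
  set Dead : Set μ.ord.ToType := {ν | ∃ ξ, #(chV F M (ξ, ν)) ≠ #S} with hDeaddef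
  have hDead : #Dead ≤ Order.succ lam := by
    by_contra hD
    push_neg at hD
    obtain ⟨W, hWD, hWcard⟩ := Cardinal.le_mk_iff_exists_subset.mp (Order.succ_le_of_lt hD)
    choose ξw hξw using fun w : ↥W => hWD w.2
    -- the pieces of a dead chain up to its death stage
    set Pw : ↥W → Set S :=
      fun w => ⋃ η : {η : θ.ord.ToType // η < ξw w}, chains F M (η.1, w.1) with hPwdef
    -- the sets of points not hitting them are small
    have hExc : ∀ w, #(univ \ pre F (Pw w) : Set S) < #S := by
      intro w
      have hsub : (univ \ pre F (Pw w) : Set S) ⊆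
          chV F M (ξw w, w.1) ∪
            ⋃ η : {η : θ.ord.ToType // η < ξw w},
              (chains F M (η.1, w.1) ∪ img F (chains F M (η.1, w.1))) := by
        intro y hy
        by_cases hyV : y ∈ chV F M (ξw w, w.1)
        · exact Or.inl hyV
        · have hyJ : y ∈ ⋃ (η : {η : θ.ord.ToType // η < ξw w}),
              junk F (chains F M (η.1, w.1)) := by
            by_contra hyJ
            exact hyV ⟨trivial, hyJ⟩
          obtain ⟨η, hη⟩ := mem_iUnion.mp hyJ
          rcases hη with hη | hη
          · exact Or.inr (mem_iUnion.mpr ⟨η, hη⟩)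
          · exfalso
            obtain ⟨x, hx1, hx2⟩ := hη
            exact hy.2 ⟨x, hx1, mem_iUnion.mpr ⟨η, hx2⟩⟩
      have hV : #(chV F M (ξw w, w.1)) < #S :=
        lt_of_le_of_ne ((Cardinal.mk_le_mk_of_subset (subset_univ _)).trans_eq
          Cardinal.mk_univ) (hξw w)
      have hC : (M (ξw w) + M (ξw w) * lam) < #S :=
        Cardinal.add_lt_of_lt hSinf (hMκ _)
          (Cardinal.mul_lt_of_lt hSinf (hMκ _) (lt_trans (Order.lt_succ lam) hbig))
      have hpieces : #(⋃ η : {η : θ.ord.ToType // η < ξw w},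
          (chains F M (η.1, w.1) ∪ img F (chains F M (η.1, w.1)) : Set S)) < #S := by
        have hone : ∀ η : {η : θ.ord.ToType // η < ξw w},
            #(chains F M (η.1, w.1) ∪ img F (chains F M (η.1, w.1)) : Set S) ≤
              M (ξw w) + M (ξw w) * lam := by
          intro η
          have h1 : #(chains F M (η.1, w.1)) ≤ M (ξw w) :=
            (chains_card_le F M _).trans (hMmono (le_of_lt η.2))
          calc #(chains F M (η.1, w.1) ∪ img F (chains F M (η.1, w.1)) : Set S)
              ≤ #(chains F M (η.1, w.1)) + #(chains F M (η.1, w.1)) * lam :=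
                mk_small_junk_le hF _
          _ ≤ M (ξw w) + M (ξw w) * lam := by gcongr
        calc #(⋃ η : {η : θ.ord.ToType // η < ξw w},
              (chains F M (η.1, w.1) ∪ img F (chains F M (η.1, w.1)) : Set S))
            ≤ Cardinal.sum (fun η : {η : θ.ord.ToType // η < ξw w} =>
              #(chains F M (η.1, w.1) ∪ img F (chains F M (η.1, w.1)) : Set S)) :=
              Cardinal.mk_iUnion_le_sum_mk
        _ ≤ Cardinal.sum (fun _ : {η : θ.ord.ToType // η < ξw w} =>
              (M (ξw w) + M (ξw w) * lam)) := Cardinal.sum_le_sum _ _ hone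
        _ = #{η : θ.ord.ToType // η < ξw w} * (M (ξw w) + M (ξw w) * lam) :=
              Cardinal.sum_const' _ _
        _ ≤ #(θ.ord.ToType) * (M (ξw w) + M (ξw w) * lam) :=
              mul_le_mul_left (Cardinal.mk_subtype_le _) _
        _ < #S := by
              rw [Cardinal.mk_ord_toType]
              exact Cardinal.mul_lt_of_lt hSinf hθκ hC
      calc #(univ \ pre F (Pw w) : Set S)
          ≤ #((chV F M (ξw w, w.1) ∪
            ⋃ η : {η : θ.ord.ToType // η < ξw w},
              (chains F M (η.1, w.1) ∪ img F (chains F M (η.1, w.1)))) : Set S) :=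
            Cardinal.mk_le_mk_of_subset hsub
      _ ≤ #(chV F M (ξw w, w.1)) + #(⋃ η : {η : θ.ord.ToType // η < ξw w},
            (chains F M (η.1, w.1) ∪ img F (chains F M (η.1, w.1)) : Set S)) :=
            Cardinal.mk_union_le _ _
      _ < #S := Cardinal.add_lt_of_lt hSinf hV hpieces
    -- pigeonhole on the target bounds
    choose mw hmw using fun w : ↥W =>
      hMcof (#(univ \ pre F (Pw w) : Set S)) (hExc w)
    have hfib : ∃ i : θ.ord.ToType,
        Order.succ lam ≤ #{w : ↥W | mw w = i} := by
      by_contra hfib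
      push_neg at hfib
      have hcover : (univ : Set ↥W) =
          ⋃ i : θ.ord.ToType, {w | mw w = i} := by
        ext w
        simp only [mem_univ, true_iff, mem_iUnion, mem_setOf_eq]
        exact ⟨mw w, rfl⟩
      have : μ ≤ θ * lam := by
        calc μ = #W := hWcard.symm
        _ = #(univ : Set ↥W) := by rw [Cardinal.mk_univ]
        _ ≤ Cardinal.sum (fun i : θ.ord.ToType => #{w : ↥W | mw w = i}) := by
            rw [hcover]
            exact Cardinal.mk_iUnion_le_sum_mk
        _ ≤ Cardinal.sum (fun _ : θ.ord.ToType => lam) :=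
            Cardinal.sum_le_sum _ _ (fun i => Order.lt_succ_iff.mp (hfib i))
        _ = #(θ.ord.ToType) * lam := Cardinal.sum_const' _ _
        _ = θ * lam := by rw [Cardinal.mk_ord_toType]
      have hθlam : θ * lam ≤ Order.succ lam := by
        calc θ * lam ≤ Order.succ lam * Order.succ lam :=
          mul_le_mul' hcof (Order.le_succ lam)
        _ = Order.succ lam := Cardinal.mul_eq_self hslaminf
      exact (Order.lt_succ (Order.succ lam)).not_ge (this.trans hθlam)
    obtain ⟨istar, histar⟩ := hfib
    obtain ⟨W', hW'sub, hW'card⟩ := Cardinal.le_mk_iff_exists_subset.mp histar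
    have hUexc : #(⋃ w : (W' : Set ↥W),
        (univ \ pre F (Pw w.1) : Set S)) < #S := by
      calc #(⋃ w : (W' : Set ↥W), (univ \ pre F (Pw w.1) : Set S))
          ≤ Cardinal.sum (fun w : (W' : Set ↥W) =>
            #(univ \ pre F (Pw w.1) : Set S)) := Cardinal.mk_iUnion_le_sum_mk
      _ ≤ Cardinal.sum (fun _ : (W' : Set ↥W) => M istar) := by
          refine Cardinal.sum_le_sum _ _ (fun w => ?_)
          have := hmw w.1
          rwa [hW'sub w.2] at this
      _ = #W' * M istar := Cardinal.sum_const' _ _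
      _ < #S := by
          rw [hW'card]
          exact Cardinal.mul_lt_of_lt hSinf hbig (hMκ istar)
    obtain ⟨y, hy⟩ := exists_not_mem_of_small hUexc
    have hyhit : ∀ w : (W' : Set ↥W), (F y ∩ Pw w.1).Nonempty := by
      intro w
      by_contra hyp
      refine hy (mem_iUnion.mpr ⟨w, ?_⟩)
      exact ⟨trivial, fun hpre => hyp hpre⟩
    choose xw hxwF hxwP using fun w => (hyhit w)
    have hinj : Function.Injective
        (fun w : (W' : Set ↥W) => (⟨xw w, hxwF w⟩ : (F y : Set S))) := by
      intro w1 w2 heq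
      by_contra hne
      simp only [Subtype.mk.injEq] at heq
      have hν : (w1.1.1 : μ.ord.ToType) ≠ w2.1.1 := by
        intro hh
        exact hne (Subtype.ext (Subtype.ext hh))
      obtain ⟨η1, hη1⟩ := mem_iUnion.mp (hxwP w1)
      obtain ⟨η2, hη2⟩ := mem_iUnion.mp (hxwP w2)
      have hpq : ((η1.1, w1.1.1) : θ.ord.ToType × μ.ord.ToType) ≠ (η2.1, w2.1.1) := by
        intro hh
        exact hν (congrArg Prod.snd hh)
      exact chains_disjoint' F M hpq (xw w1) hη1 (heq ▸ hη2)
    have hcard : Order.succ lam ≤ #(F y) := by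
      rw [← hW'card]
      exact Cardinal.mk_le_of_injective hinj
    exact (Order.lt_succ lam).not_ge (hcard.trans (hF y))
  -- a surviving chain exists
  have hsurv : ∃ ν : μ.ord.ToType, ∀ ξ, #(chV F M (ξ, ν)) = #S := by
    by_contra hno
    push_neg at hno
    have : (univ : Set μ.ord.ToType) ⊆ Dead := by
      intro ν _
      obtain ⟨ξ, hξ⟩ := hno ν
      exact ⟨ξ, hξ⟩
    have hμle : μ ≤ Order.succ lam := by
      calc μ = #(μ.ord.ToType) := (Cardinal.mk_ord_toType μ).symm
      _ = #(univ : Set μ.ord.ToType) := Cardinal.mk_univ.symm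
      _ ≤ #Dead := Cardinal.mk_le_mk_of_subset this
      _ ≤ Order.succ lam := hDead
    exact (Order.lt_succ (Order.succ lam)).not_ge hμle
  obtain ⟨νs, hνs⟩ := hsurv
  have hpiece : ∀ ξ, chains F M (ξ, νs) ⊆ chPool F M (ξ, νs) ∧
      Free F (chains F M (ξ, νs)) ∧ #(chains F M (ξ, νs)) = M ξ :=
    fun ξ => hguard (ξ, νs) (hνs ξ)
  refine ⟨⋃ ξ : θ.ord.ToType, chains F M (ξ, νs), ?_, ?_⟩
  · -- cardinality
    have hle : #(⋃ ξ : θ.ord.ToType, chains F M (ξ, νs)) ≤ #S :=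
      (Cardinal.mk_le_mk_of_subset (subset_univ _)).trans_eq Cardinal.mk_univ
    refine le_antisymm hle ?_
    by_contra hlt
    push_neg at hlt
    obtain ⟨ξ, hξ⟩ := hMcof
      (Order.succ (max (#(⋃ ξ : θ.ord.ToType, chains F M (ξ, νs))) (Order.succ lam)))
      (hsucc_lt _ hlt)
    have h1 : M ξ ≤ #(⋃ ξ : θ.ord.ToType, chains F M (ξ, νs)) := by
      rw [← (hpiece ξ).2.2]
      exact Cardinal.mk_le_mk_of_subset (subset_iUnion (fun ξ => chains F M (ξ, νs)) ξ)
    have h2 : #(⋃ ξ : θ.ord.ToType, chains F M (ξ, νs)) <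
        Order.succ (max (#(⋃ ξ : θ.ord.ToType, chains F M (ξ, νs))) (Order.succ lam)) :=
      (le_max_left _ _).trans_lt (Order.lt_succ _)
    exact h2.not_ge (hξ.trans h1)
  · -- freeness
    intro x hx y hy hxy
    obtain ⟨ξ, hxξ⟩ := mem_iUnion.mp hx
    obtain ⟨ξ', hyξ'⟩ := mem_iUnion.mp hy
    rcases lt_trichotomy ξ ξ' with h | h | h
    · intro hyF
      have hyV : y ∈ chV F M (ξ', νs) := ((hpiece ξ').1 hyξ').1
      refine hyV.2 (mem_iUnion.mpr ⟨⟨ξ, h⟩, Or.inl (Or.inr ?_)⟩)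
      exact mem_iUnion.mpr ⟨⟨x, hxξ⟩, hyF⟩
    · subst h
      exact (hpiece ξ).2.1 x hxξ y hyξ' hxy
    · intro hyF
      have hxV : x ∈ chV F M (ξ, νs) := ((hpiece ξ).1 hxξ).1
      exact hxV.2 (mem_iUnion.mpr ⟨⟨ξ', h⟩, Or.inr ⟨y, hyF, hyξ'⟩⟩)

end HajnalAux


open Cardinal

/-- Hajnal's free set lemma (successor case): if `#S = κ`, `λ` is an infinite
cardinal with `λ⁺ < κ`, and `F : S → 𝒫 S` satisfies `#(F x) ≤ λ` for all `x`,
then there is a free set of size `κ`. -/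
theorem hajnal_free_set {S : Type*} (κ lam : Cardinal) (hS : #S = κ)
    (hlam : ℵ₀ ≤ lam) (hlt : Order.succ lam < κ)
    (F : S → Set S) (hF : ∀ x, #(F x) ≤ lam) :
    ∃ S' : Set S, #S' = κ ∧ ∀ x ∈ S', ∀ y ∈ S', x ≠ y → y ∉ F x := by
  subst hS
  rcases le_or_gt ((#S).ord.cof) (Order.succ lam) with h | h
  · obtain ⟨A, hA1, hA2⟩ := HajnalAux.case_small_cof F hlam hF hlt h
    exact ⟨A, hA1, hA2⟩
  · obtain ⟨A, hA1, hA2⟩ := HajnalAux.case_big_cof F hlam hF hlt h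
    exact ⟨A, hA1, hA2⟩
end

section
/- If F is a transitive family of continuous self-maps of 2^ω, then the cardinality of the continuum is at most |F|⁺ (the cardinal successor of the cardinality of F). -/
open Cardinal

/-- If `F` is a transitive family of continuous self-maps of the Cantor set,
then `𝔠 ≤ #F⁺`. -/
theorem continuum_le_succ_of_transitive
    (F : Set ((ℕ → Bool) → (ℕ → Bool)))
    (hcont : ∀ f ∈ F, Continuous f)
    (htrans : ∀ x y : ℕ → Bool, ∃ f ∈ F, f x = y ∨ f y = x) :
    Cardinal.continuum ≤ Order.succ #F := by
  by_contra hlt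
  push_neg at hlt
  have hmk : #(ℕ → Bool) = Cardinal.continuum := by
    simp [Cardinal.mk_arrow]
  obtain ⟨T, hT⟩ := Cardinal.le_mk_iff_exists_set.mp (hmk ▸ hlt.le)
  set G : (ℕ → Bool) → Set (ℕ → Bool) := fun x => Set.range (fun f : F => f.1 x) with hG
  have hGcard : ∀ x, #(G x) ≤ #F := fun x => Cardinal.mk_range_le
  have hFlt : #F < Cardinal.continuum := (Order.lt_succ _).trans hlt
  have hU : #(⋃ t ∈ T, G t) < Cardinal.continuum := by
    calc #(⋃ t ∈ T, G t) ≤ #T * ⨆ t : T, #(G (t : ℕ → Bool)) := Cardinal.mk_biUnion_le _ _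
      _ ≤ #T * #F := by
          apply mul_le_mul_right
          exact ciSup_le' fun t => hGcard _
      _ < Cardinal.continuum := Cardinal.mul_lt_of_lt aleph0_le_continuum (hT ▸ hlt) hFlt
  have hne : (⋃ t ∈ T, G t) ≠ Set.univ := by
    intro h
    rw [h] at hU
    simp [hmk] at hU
  obtain ⟨x, hx⟩ := Set.ne_univ_iff_exists_notMem _ |>.mp hne
  have hsub : T ⊆ G x := by
    intro t ht
    obtain ⟨f, hf, hcase⟩ := htrans x t
    rcases hcase with h1 | h2
    · exact ⟨⟨f, hf⟩, h1⟩
    · have hxGt : x ∈ G t := ⟨⟨f, hf⟩, h2⟩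
      exact absurd (Set.mem_biUnion ht hxGt) hx
  have : Order.succ #F ≤ #F := by
    calc Order.succ #F = #T := hT.symm
      _ ≤ #(G x) := Cardinal.mk_le_mk_of_subset hsub
      _ ≤ #F := hGcard x
  exact absurd this (Order.lt_succ _).not_ge
end

section
/- Define tf(C) as the minimum cardinality of a transitive family of continuous self-maps of the Cantor set C = 2^ω. Then ℵ₁ ≤ tf(C) ≤ 𝔠 ≤ tf(C)⁺. -/
open Cardinal

/-- `tf X` is the least cardinality of a transitive family of continuous
self-maps of `X`. -/
noncomputable def tf (X : Type*) [TopologicalSpace X] : Cardinal :=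
  sInf {c : Cardinal | ∃ F : Set (X → X),
    (∀ f ∈ F, Continuous f) ∧ (∀ x y : X, ∃ f ∈ F, f x = y ∨ f y = x) ∧
    #F = c}

/-- cardinality of the Cantor set -/
lemma mk_cantor : #(ℕ → Bool) = Cardinal.continuum := by
  rw [Cardinal.mk_arrow]
  simp [Cardinal.two_power_aleph0]

/-- any nonempty open set in the Cantor set contains a point different from `a` -/
lemma exists_ne_mem_open (a : ℕ → Bool) {U : Set (ℕ → Bool)} (hU : IsOpen U)
    (hne : U.Nonempty) : ∃ v ∈ U, v ≠ a := by
  obtain ⟨u, hu⟩ := hne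
  by_cases hua : u = a
  · subst hua
    set s : ℕ → (ℕ → Bool) := fun n => Function.update u n (!(u n)) with hs
    have htend : Filter.Tendsto s Filter.atTop (nhds u) := by
      rw [tendsto_pi_nhds]
      intro k
      apply Filter.Tendsto.congr' _ (tendsto_const_nhds (x := u k))
      filter_upwards [Filter.eventually_gt_atTop k] with n hn
      simp [hs, Function.update_of_ne (by omega : k ≠ n)]
    have hev : ∀ᶠ n in Filter.atTop, s n ∈ U := htend.eventually (hU.eventually_mem hu)
    obtain ⟨n, hn⟩ := hev.exists
    refine ⟨s n, hn, ?_⟩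
    intro h
    have : s n n = u n := by rw [h]
    simp [hs, Function.update_self] at this
  · exact ⟨u, hu, hua⟩

/-- no countable transitive family of continuous maps on the Cantor set -/
lemma no_countable_transitive (F : Set ((ℕ → Bool) → (ℕ → Bool)))
    (hc : ∀ f ∈ F, Continuous f)
    (ht : ∀ x y : ℕ → Bool, ∃ f ∈ F, f x = y ∨ f y = x)
    (hcnt : F.Countable) : False := by
  haveI := hcnt.to_subtype
  -- for every x there is a map in F constant equal to x on a basic open set
  have claim : ∀ x : ℕ → Bool, ∃ p : F × (TopologicalSpace.countableBasis (ℕ → Bool)),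
      ∃ z, z ∈ (p.2 : Set (ℕ → Bool)) ∧
        ∀ w ∈ (p.2 : Set (ℕ → Bool)), (p.1 : (ℕ → Bool) → (ℕ → Bool)) w = x := by
    intro x
    set g : F → Set (ℕ → Bool) :=
      fun f => {(f : (ℕ → Bool) → (ℕ → Bool)) x} ∪ (f : (ℕ → Bool) → (ℕ → Bool)) ⁻¹' {x}
      with hg
    have hclosed : ∀ f : F, IsClosed (g f) := fun f =>
      isClosed_singleton.union (IsClosed.preimage (hc f f.2) isClosed_singleton)
    have hcover : ⋃ f : F, g f = Set.univ := by
      ext y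
      simp only [Set.mem_iUnion, Set.mem_univ, iff_true, hg, Set.mem_union,
        Set.mem_singleton_iff, Set.mem_preimage]
      obtain ⟨f, hf, h⟩ := ht x y
      exact ⟨⟨f, hf⟩, by tauto⟩
    obtain ⟨f, hf⟩ := nonempty_interior_of_iUnion_of_closed hclosed hcover
    set V := interior (g f) with hV
    have hVopen : IsOpen V := isOpen_interior
    obtain ⟨v, hvV, hvne⟩ := exists_ne_mem_open ((f : (ℕ → Bool) → (ℕ → Bool)) x) hVopen hf
    set W := V ∩ {(f : (ℕ → Bool) → (ℕ → Bool)) x}ᶜ with hW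
    have hWopen : IsOpen W := hVopen.inter isClosed_singleton.isOpen_compl
    have hvW : v ∈ W := ⟨hvV, hvne⟩
    obtain ⟨b, hbB, hvb, hbW⟩ :=
      (TopologicalSpace.isBasis_countableBasis (ℕ → Bool)).exists_subset_of_mem_open hvW hWopen
    refine ⟨⟨f, ⟨b, hbB⟩⟩, v, hvb, ?_⟩
    intro w hw
    have hwW := hbW hw
    have hwg : w ∈ g f := interior_subset hwW.1
    rcases hwg with h | h
    · exact absurd h hwW.2
    · exact h
  choose Φ z hz hΦ using claim
  have hinj : Function.Injective Φ := by
    intro x x' h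
    have h1 := hΦ x (z x) (hz x)
    have h2 := hΦ x' (z x) (by rw [← h]; exact hz x)
    rw [h] at h1
    rw [← h1, h2]
  have hle : #(ℕ → Bool) ≤ ℵ₀ := by
    calc #(ℕ → Bool) ≤ #(F × (TopologicalSpace.countableBasis (ℕ → Bool))) :=
          Cardinal.mk_le_of_injective hinj
      _ ≤ ℵ₀ := Cardinal.mk_le_aleph0
  rw [mk_cantor] at hle
  exact absurd hle (not_le.2 Cardinal.aleph0_lt_continuum)

/-- `ℵ₁ ≤ tf(C) ≤ 𝔠 ≤ tf(C)⁺` for the Cantor set `C = 2^ω`. -/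
theorem tf_cantor_bounds :
    Cardinal.aleph 1 ≤ tf (ℕ → Bool) ∧
    tf (ℕ → Bool) ≤ Cardinal.continuum ∧
    Cardinal.continuum ≤ Order.succ (tf (ℕ → Bool)) := by
  set S := {c : Cardinal | ∃ F : Set ((ℕ → Bool) → (ℕ → Bool)),
    (∀ f ∈ F, Continuous f) ∧ (∀ x y : ℕ → Bool, ∃ f ∈ F, f x = y ∨ f y = x) ∧
    #F = c} with hS
  -- the family of constant maps witnesses membership of 𝔠
  have hconst : Cardinal.continuum ∈ S := by
    refine ⟨Set.range (fun y : ℕ → Bool => Function.const (ℕ → Bool) y), ?_, ?_, ?_⟩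
    · rintro f ⟨y, rfl⟩
      exact continuous_const
    · intro x y
      exact ⟨Function.const _ y, ⟨y, rfl⟩, Or.inl rfl⟩
    · rw [Cardinal.mk_range_eq _ (Function.const_injective)]
      exact mk_cantor
  have hne : S.Nonempty := ⟨_, hconst⟩
  -- lower bound: every member of S is uncountable
  have hlow : ∀ c ∈ S, Cardinal.aleph 1 ≤ c := by
    rintro c ⟨F, hc, ht, rfl⟩
    by_contra hlt
    rw [not_le] at hlt
    have : F.Countable := (Cardinal.countable_iff_lt_aleph_one F).2 hlt
    exact no_countable_transitive F hc ht this
  have h1 : Cardinal.aleph 1 ≤ tf (ℕ → Bool) := le_csInf hne hlow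
  have h2 : tf (ℕ → Bool) ≤ Cardinal.continuum := csInf_le (OrderBot.bddBelow S) hconst
  refine ⟨h1, h2, ?_⟩
  -- upper bound for 𝔠 : the infimum is attained
  have hmem : tf (ℕ → Bool) ∈ S := csInf_mem hne
  obtain ⟨F, hc, ht, hF⟩ := hmem
  set κ := tf (ℕ → Bool) with hκ
  have hκinf : ℵ₀ ≤ κ := le_trans (le_of_lt Cardinal.aleph0_lt_aleph_one) h1
  by_contra hcon
  rw [not_le] at hcon
  -- succ κ < 𝔠, so we can find a subset Y of size succ κ
  have hsucc_lt : Order.succ κ < Cardinal.continuum := hcon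
  have hsuccinf : ℵ₀ ≤ Order.succ κ := le_trans hκinf (Order.le_succ κ)
  obtain ⟨Y, hY⟩ : ∃ Y : Set (ℕ → Bool), #Y = Order.succ κ := by
    rw [← Cardinal.le_mk_iff_exists_set, mk_cantor]
    exact le_of_lt hsucc_lt
  haveI : Nonempty F := by
    obtain ⟨f0, hf0, -⟩ := ht (fun _ => false) (fun _ => false)
    exact ⟨⟨f0, hf0⟩⟩
  -- the "small" set T
  set T : Set (ℕ → Bool) := Y ∪ ⋃ f : F, (f : (ℕ → Bool) → (ℕ → Bool)) '' Y with hT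
  have hTsmall : #T ≤ Order.succ κ := by
    calc #T ≤ #Y + #(⋃ f : F, (f : (ℕ → Bool) → (ℕ → Bool)) '' Y) := Cardinal.mk_union_le _ _
      _ ≤ Order.succ κ + #F * Order.succ κ := by
          gcongr
          · exact le_of_eq hY
          · refine le_trans (Cardinal.mk_iUnion_le _) ?_
            gcongr
            apply ciSup_le'
            intro f
            exact le_trans (Cardinal.mk_image_le) (le_of_eq hY)
      _ ≤ Order.succ κ + Order.succ κ * Order.succ κ := by
          gcongr
          exact le_trans (le_of_eq hF) (Order.le_succ κ)
      _ = Order.succ κ := by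
          rw [Cardinal.mul_eq_self hsuccinf, Cardinal.add_eq_self hsuccinf]
  have hTne : T ≠ Set.univ := by
    intro h
    rw [h, Cardinal.mk_univ, mk_cantor] at hTsmall
    exact absurd (lt_of_le_of_lt hTsmall hsucc_lt) (lt_irrefl _)
  obtain ⟨x, hx⟩ : ∃ x, x ∉ T := by
    by_contra h
    push_neg at h
    exact hTne (Set.eq_univ_of_forall h)
  -- every element of Y is an image of x
  have hmap : ∀ y : Y, ∃ f : F, (f : (ℕ → Bool) → (ℕ → Bool)) x = y := by
    rintro ⟨y, hy⟩
    obtain ⟨f, hf, h⟩ := ht x y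
    rcases h with h | h
    · exact ⟨⟨f, hf⟩, h⟩
    · exfalso
      apply hx
      rw [hT]
      right
      exact Set.mem_iUnion.2 ⟨⟨f, hf⟩, ⟨y, hy, h⟩⟩
  choose Ψ hΨ using hmap
  have hΨinj : Function.Injective Ψ := by
    intro y1 y2 h
    have := hΨ y1
    rw [h, hΨ y2] at this
    exact Subtype.ext this.symm
  have : Order.succ κ ≤ κ := by
    rw [← hY, ← hF]
    exact Cardinal.mk_le_of_injective hΨinj
  exact absurd this (not_le.2 (Order.lt_succ κ))
end

section
/- If F is a transitive family of continuous self-maps of 2^ω, then |F| is at least the minimum number of nowhere dense sets needed to cover 2^ω (i.e., |F| ≥ cov(meager) for the Cantor set, where cov is taken with respect to nowhere dense sets). -/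
open Cardinal

/-- Every point of `2^ω` is not isolated: any open set containing it contains
another point. -/
lemma cantor_exists_ne_mem (y : ℕ → Bool) (v : Set (ℕ → Bool)) (hv : IsOpen v)
    (hy : y ∈ v) : ∃ y' ∈ v, y' ≠ y := by
  obtain ⟨I, u, hu, hsub⟩ := isOpen_pi_iff.mp hv y hy
  obtain ⟨n, hn⟩ : ∃ n, n ∉ I :=
    ⟨I.sup id + 1, fun hmem => by
      have h2 : I.sup id + 1 ≤ I.sup id := Finset.le_sup (f := id) hmem
      omega⟩
  refine ⟨Function.update y n (!y n), hsub fun i hi => ?_, fun h => ?_⟩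
  · rw [Function.update_of_ne (by rintro rfl; exact hn hi)]
    exact (hu i hi).2
  · have := congrFun h n
    simp [Function.update_self] at this

/-- The graph of a continuous self-map of `2^ω` has empty interior. -/
lemma graph_interior_empty (f : (ℕ → Bool) → (ℕ → Bool)) :
    interior {p : (ℕ → Bool) × (ℕ → Bool) | f p.1 = p.2} = ∅ := by
  rw [Set.eq_empty_iff_forall_notMem]
  rintro ⟨x, y⟩ hp
  rw [mem_interior_iff_mem_nhds, nhds_prod_eq, Filter.mem_prod_iff] at hp
  obtain ⟨u, hu, v, hv, huv⟩ := hp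
  obtain ⟨v', hv'sub, hv'open, hyv'⟩ := mem_nhds_iff.mp hv
  obtain ⟨y', hy'v, hy'ne⟩ := cantor_exists_ne_mem y v' hv'open hyv'
  have h1 : f x = y := huv (Set.mk_mem_prod (mem_of_mem_nhds hu) (hv'sub hyv'))
  have h2 : f x = y' := huv (Set.mk_mem_prod (mem_of_mem_nhds hu) (hv'sub hy'v))
  exact hy'ne (h2 ▸ h1)

/-- A transitive family of continuous self-maps of `2^ω` has cardinality at
least the least number of nowhere dense sets needed to cover `2^ω`. -/
theorem cov_nowhereDense_le_transitive
    (F : Set ((ℕ → Bool) → (ℕ → Bool)))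
    (hcont : ∀ f ∈ F, Continuous f)
    (htrans : ∀ x y : ℕ → Bool, ∃ f ∈ F, f x = y ∨ f y = x) :
    sInf {c : Cardinal | ∃ G : Set (Set (ℕ → Bool)),
        (∀ s ∈ G, IsNowhereDense s) ∧ ⋃₀ G = Set.univ ∧ #G = c} ≤ #F := by
  -- homeomorphism `2^ω ≃ₜ 2^ω × 2^ω`
  let h : (ℕ → Bool) ≃ₜ (ℕ → Bool) × (ℕ → Bool) :=
    (Homeomorph.piCongrLeft (Y := fun _ => Bool) Equiv.natSumNatEquivNat).symm.trans
      Homeomorph.sumArrowHomeomorphProdArrow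
  -- to each `f` associate a nowhere dense subset of `2^ω`
  let N : ((ℕ → Bool) → (ℕ → Bool)) → Set (ℕ → Bool) := fun f =>
    h ⁻¹' {p | f p.1 = p.2 ∨ f p.2 = p.1}
  have hN : ∀ f ∈ F, IsNowhereDense (N f) := by
    intro f hf
    have hc : Continuous f := hcont f hf
    have hclosed : IsClosed {p : (ℕ → Bool) × (ℕ → Bool) | f p.1 = p.2 ∨ f p.2 = p.1} := by
      have c1 : IsClosed {p : (ℕ → Bool) × (ℕ → Bool) | f p.1 = p.2} :=
        isClosed_eq (hc.comp continuous_fst) continuous_snd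
      have c2 : IsClosed {p : (ℕ → Bool) × (ℕ → Bool) | f p.2 = p.1} :=
        isClosed_eq (hc.comp continuous_snd) continuous_fst
      exact c1.union c2
    have hint : interior {p : (ℕ → Bool) × (ℕ → Bool) | f p.1 = p.2 ∨ f p.2 = p.1} = ∅ := by
      have e1 := graph_interior_empty f
      have e2 : interior {p : (ℕ → Bool) × (ℕ → Bool) | f p.2 = p.1} = ∅ := by
        have : {p : (ℕ → Bool) × (ℕ → Bool) | f p.2 = p.1} =
            (Homeomorph.prodComm _ _) ⁻¹' {p : (ℕ → Bool) × (ℕ → Bool) | f p.1 = p.2} := by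
          ext p; rfl
        rw [this, ← Homeomorph.preimage_interior, e1, Set.preimage_empty]
      -- union of two closed sets with empty interior has empty interior
      have d1 : Dense {p : (ℕ → Bool) × (ℕ → Bool) | f p.1 = p.2}ᶜ := by
        rw [← interior_eq_empty_iff_dense_compl, e1]
      have d2 : Dense {p : (ℕ → Bool) × (ℕ → Bool) | f p.2 = p.1}ᶜ := by
        rw [← interior_eq_empty_iff_dense_compl, e2]
      have o1 : IsOpen {p : (ℕ → Bool) × (ℕ → Bool) | f p.1 = p.2}ᶜ :=
        (isClosed_eq (hc.comp continuous_fst) continuous_snd).isOpen_compl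
      have : Dense ({p : (ℕ → Bool) × (ℕ → Bool) | f p.1 = p.2} ∪
          {p : (ℕ → Bool) × (ℕ → Bool) | f p.2 = p.1})ᶜ := by
        rw [Set.compl_union]
        exact d1.inter_of_isOpen_left d2 o1
      rwa [← interior_eq_empty_iff_dense_compl] at this
    have hNclosed : IsClosed (N f) := hclosed.preimage h.continuous
    rw [hNclosed.isNowhereDense_iff]
    show interior (h ⁻¹' _) = ∅
    rw [← Homeomorph.preimage_interior, hint, Set.preimage_empty]
  have hcover : ⋃₀ (N '' F) = Set.univ := by
    rw [Set.eq_univ_iff_forall]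
    intro z
    obtain ⟨f, hf, hfz⟩ := htrans (h z).1 (h z).2
    exact ⟨N f, Set.mem_image_of_mem N hf, hfz⟩
  refine le_trans (csInf_le' ?_) (Cardinal.mk_image_le (f := N) (s := F))
  exact ⟨N '' F, fun s hs => by obtain ⟨f, hf, rfl⟩ := hs; exact hN f hf, hcover, rfl⟩
end

section
/- If the unit interval [0,1] cannot be covered by fewer than 𝔠 nowhere dense sets, then the minimal cardinality of a transitive family of continuous self-maps of [0,1] equals 𝔠. -/
open Cardinal

/-- If `[0,1]` cannot be covered by fewer than `𝔠` nowhere dense sets, then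
`tf([0,1]) = 𝔠`. -/
theorem tf_unitInterval_eq_continuum
    (hcov : ∀ G : Set (Set unitInterval), (∀ s ∈ G, IsNowhereDense s) →
        ⋃₀ G = Set.univ → Cardinal.continuum ≤ #G) :
    tf unitInterval = Cardinal.continuum := by
  have hmk : #unitInterval = Cardinal.continuum := by
    simpa [unitInterval] using Cardinal.mk_Icc_real (by norm_num : (0:ℝ) < 1)
  have hwit : Cardinal.continuum ∈ {c : Cardinal | ∃ F : Set (unitInterval → unitInterval),
      (∀ f ∈ F, Continuous f) ∧ (∀ x y : unitInterval, ∃ f ∈ F, f x = y ∨ f y = x) ∧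
      #F = c} := by
    refine ⟨Set.range (fun y : unitInterval => Function.const unitInterval y), ?_, ?_, ?_⟩
    · rintro f ⟨y, rfl⟩; exact continuous_const
    · intro x y; exact ⟨Function.const unitInterval y, ⟨y, rfl⟩, Or.inl rfl⟩
    · rw [Cardinal.mk_range_eq _ (fun a b h => congrFun h 0), hmk]
  apply le_antisymm
  · exact csInf_le' hwit
  · apply le_csInf ⟨_, hwit⟩
    rintro c ⟨F, hF, htrans, rfl⟩
    by_contra hlt
    push_neg at hlt
    -- Bad f : points whose fiber under f has nonempty interior
    set Bad : (unitInterval → unitInterval) → Set unitInterval :=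
      fun f => {y | (interior (f ⁻¹' {y})).Nonempty} with hBad
    have hBadCount : ∀ f, (Bad f).Countable := by
      intro f
      apply Set.PairwiseDisjoint.countable_of_isOpen
        (s := fun y => interior (f ⁻¹' {y}))
      · intro y _ z _ hyz
        refine Set.disjoint_left.2 fun x hx hx' => hyz ?_
        have h1 : f x ∈ ({y} : Set unitInterval) :=
          interior_subset (s := f ⁻¹' {y}) hx
        have h2 : f x ∈ ({z} : Set unitInterval) :=
          interior_subset (s := f ⁻¹' {z}) hx'
        rw [← Set.mem_singleton_iff.1 h1, Set.mem_singleton_iff.1 h2]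
      · intro y _; exact isOpen_interior
      · intro y hy; exact hy
    set B : Set unitInterval := ⋃ f : F, Bad f with hB
    have hBlt : #B < Cardinal.continuum := by
      calc #B ≤ #F * ⨆ f : F, #(Bad (f : unitInterval → unitInterval)) :=
            Cardinal.mk_iUnion_le _
        _ ≤ #F * Cardinal.aleph0 := by
            exact mul_le_mul_right (ciSup_le' fun (f : F) => (hBadCount f.1).le_aleph0) _
        _ < Cardinal.continuum :=
            Cardinal.mul_lt_of_lt Cardinal.aleph0_le_continuum hlt
              Cardinal.aleph0_lt_continuum
    have hBne : B ≠ Set.univ := by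
      intro h
      rw [h] at hBlt
      rw [Cardinal.mk_univ, hmk] at hBlt
      exact lt_irrefl _ hBlt
    obtain ⟨x₀, hx₀⟩ := Set.ne_univ_iff_exists_notMem B |>.1 hBne
    have hx₀' : ∀ f ∈ F, interior (f ⁻¹' {x₀}) = ∅ := by
      intro f hf
      by_contra hne
      exact hx₀ (Set.mem_iUnion.2 ⟨⟨f, hf⟩, Set.nonempty_iff_ne_empty.2 hne⟩)
    -- the cover
    set G : Set (Set unitInterval) :=
      ((fun f : unitInterval → unitInterval => ({f x₀} : Set unitInterval)) '' F) ∪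
      ((fun f : unitInterval → unitInterval => f ⁻¹' {x₀}) '' F) with hG
    have hsingle : ∀ a : unitInterval, IsNowhereDense ({a} : Set unitInterval) := by
      intro a
      unfold IsNowhereDense
      rw [closure_singleton]
      by_contra hne
      have hnonempty : (interior ({a} : Set unitInterval)).Nonempty :=
        Set.nonempty_iff_ne_empty.2 hne
      have hint : interior ({a} : Set unitInterval) = {a} := by
        apply Set.Subset.antisymm interior_subset
        obtain ⟨x, hx⟩ := hnonempty
        have : x ∈ ({a} : Set unitInterval) := interior_subset hx
        have : x = a := Set.mem_singleton_iff.1 this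
        subst this
        intro y hy
        rcases hy with rfl
        exact hx
      have hopen : IsOpen ({a} : Set unitInterval) := hint ▸ isOpen_interior
      have hclopen : IsClopen ({a} : Set unitInterval) := ⟨isClosed_singleton, hopen⟩
      rcases isClopen_iff.1 hclopen with h | h
      · exact (Set.singleton_nonempty a).ne_empty h
      · have h0 : (0 : unitInterval) ∈ ({a} : Set unitInterval) := h ▸ Set.mem_univ _
        have h1 : (1 : unitInterval) ∈ ({a} : Set unitInterval) := h ▸ Set.mem_univ _
        have : (0 : unitInterval) = 1 :=
          (Set.mem_singleton_iff.1 h0).trans (Set.mem_singleton_iff.1 h1).symm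
        exact zero_ne_one (congrArg Subtype.val this)
    have hnwd : ∀ s ∈ G, IsNowhereDense s := by
      rintro s (⟨f, hf, rfl⟩ | ⟨f, hf, rfl⟩)
      · exact hsingle (f x₀)
      · unfold IsNowhereDense
        have hcl : IsClosed (f ⁻¹' {x₀}) := (isClosed_singleton).preimage (hF f hf)
        rw [hcl.closure_eq]
        exact hx₀' f hf
    have hcover : ⋃₀ G = Set.univ := by
      apply Set.eq_univ_of_forall
      intro y
      obtain ⟨f, hf, hfy⟩ := htrans x₀ y
      rcases hfy with h | h
      · exact ⟨{f x₀}, Or.inl ⟨f, hf, rfl⟩, Set.mem_singleton_iff.2 h.symm⟩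
      · exact ⟨f ⁻¹' {x₀}, Or.inr ⟨f, hf, rfl⟩, Set.mem_preimage.2 (Set.mem_singleton_iff.2 h)⟩
    have hGlt : #G < Cardinal.continuum := by
      calc #G ≤ _ + _ := Cardinal.mk_union_le _ _
        _ < Cardinal.continuum :=
            Cardinal.add_lt_of_lt Cardinal.aleph0_le_continuum
              (lt_of_le_of_lt Cardinal.mk_image_le hlt)
              (lt_of_le_of_lt Cardinal.mk_image_le hlt)
    exact absurd (hcov G hnwd hcover) (not_le.2 hGlt)
end

section
/- Every continuous map f between two closed nowhere dense disjoint subsets A, B of the Cantor set 2^ω extends to a continuous self-map of 2^ω. -/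
/-- In a compact Hausdorff totally disconnected space, disjoint compact sets can be
separated by a clopen set. -/
lemma exists_isClopen_separating {X : Type*} [TopologicalSpace X] [CompactSpace X]
    [T2Space X] [TotallyDisconnectedSpace X] {K L : Set X} (hK : IsCompact K)
    (hL : IsCompact L) (hd : Disjoint K L) :
    ∃ V : Set X, IsClopen V ∧ K ⊆ V ∧ Disjoint V L := by
  have hopen : IsOpen Lᶜ := hL.isClosed.isOpen_compl
  have hmem : ∀ x : K, ∃ V : Set X, IsClopen V ∧ (x : X) ∈ V ∧ V ⊆ Lᶜ := fun x =>
    compact_exists_isClopen_in_isOpen hopen (Set.disjoint_left.mp hd x.2)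
  choose V hV hxV hVL using hmem
  obtain ⟨t, ht⟩ := hK.elim_finite_subcover V (fun i => (hV i).2)
    (fun x hx => Set.mem_iUnion.mpr ⟨⟨x, hx⟩, hxV ⟨x, hx⟩⟩)
  refine ⟨⋃ i ∈ t, V i, ?_, ht, ?_⟩
  · exact t.finite_toSet.isClopen_biUnion (fun i _ => hV i)
  · refine Set.disjoint_left.mpr fun x hx hxL => ?_
    obtain ⟨i, _, hxi⟩ := Set.mem_iUnion₂.mp hx
    exact (hVL i hxi) hxL

/-- Every continuous map between two disjoint closed nowhere dense subsets of
the Cantor set extends to a continuous self-map of the Cantor set. -/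
theorem extend_continuous_map_nowhereDense
    (A B : Set (ℕ → Bool)) (hA : IsClosed A) (hAnd : IsNowhereDense A)
    (hB : IsClosed B) (hBnd : IsNowhereDense B) (hdisj : A ∩ B = ∅)
    (f : A → B) (hf : Continuous f) :
    ∃ F : (ℕ → Bool) → (ℕ → Bool), Continuous F ∧
      ∀ a : A, F a = (f a : ℕ → Bool) := by
  haveI : CompactSpace A := isCompact_iff_compactSpace.mp hA.isCompact
  -- coordinate functions of f
  set g : ℕ → A → Bool := fun n a => (f a : ℕ → Bool) n with hg
  have hgc : ∀ n, Continuous (g n) := fun n =>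
    (continuous_apply n).comp (continuous_subtype_val.comp hf)
  -- compact preimage sets
  have key : ∀ n : ℕ, ∃ V : Set (ℕ → Bool), IsClopen V ∧
      (Subtype.val '' (g n ⁻¹' {true}) ⊆ V) ∧
      Disjoint V (Subtype.val '' (g n ⁻¹' {false})) := by
    intro n
    have hKc : IsCompact (Subtype.val '' (g n ⁻¹' {true})) :=
      (((isClosed_singleton (x := true)).preimage (hgc n)).isCompact).image
        continuous_subtype_val
    have hLc : IsCompact (Subtype.val '' (g n ⁻¹' {false})) :=
      (((isClosed_singleton (x := false)).preimage (hgc n)).isCompact).image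
        continuous_subtype_val
    have hd : Disjoint (Subtype.val '' (g n ⁻¹' {true}))
        (Subtype.val '' (g n ⁻¹' {false})) := by
      refine Set.disjoint_left.mpr ?_
      rintro x ⟨a, ha, rfl⟩ ⟨b, hb, hab⟩
      have : a = b := Subtype.val_injective hab.symm
      rw [this] at ha
      simp only [Set.mem_preimage, Set.mem_singleton_iff] at ha hb
      rw [ha] at hb; exact Bool.noConfusion hb
    exact exists_isClopen_separating hKc hLc hd
  choose V hV hKV hVL using key
  refine ⟨fun x n => (V n).boolIndicator x, ?_, ?_⟩
  · exact continuous_pi fun n => (continuous_boolIndicator_iff_isClopen _).mpr (hV n)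
  · intro a
    funext n
    show (V n).boolIndicator (a : ℕ → Bool) = g n a
    rcases Bool.eq_false_or_eq_true (g n a) with h | h
    swap
    · have hmem : (a : ℕ → Bool) ∈ Subtype.val '' (g n ⁻¹' {false}) :=
        ⟨a, by simpa using h, rfl⟩
      have : (a : ℕ → Bool) ∉ V n := Set.disjoint_right.mp (hVL n) hmem
      rw [((V n).notMem_iff_boolIndicator _).mp this, h]
    · have hmem : (a : ℕ → Bool) ∈ V n :=
        hKV n ⟨a, by simpa using h, rfl⟩
      rw [((V n).mem_iff_boolIndicator _).mp hmem, h]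
end

section
/- Every homeomorphism h between two closed nowhere dense subsets of the Cantor set 2^ω can be extended to a homeomorphism of 2^ω onto itself. -/
open Set

noncomputable section KR

abbrev XX : Type := ℕ → Bool

/-- first `n` values of `x` as a list -/
def pre (n : ℕ) (x : XX) : List Bool := List.ofFn (fun i : Fin n => x i)

@[simp] lemma pre_length (n : ℕ) (x : XX) : (pre n x).length = n := by
  simp [pre]

@[simp] lemma pre_getElem (n : ℕ) (x : XX) (i : ℕ) (hi : i < (pre n x).length) :
    (pre n x)[i] = x i := by
  simp [pre]

lemma pre_get (n : ℕ) (x : XX) (i : ℕ) (hi : i < (pre n x).length) :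
    (pre n x).get ⟨i, hi⟩ = x i := by
  simp [pre]

/-- cylinder of a finite string -/
def cyl (s : List Bool) : Set XX := {x | ∀ i : ℕ, (hi : i < s.length) → x i = s.get ⟨i, hi⟩}

lemma mem_cyl_pre_iff {n : ℕ} {x y : XX} : y ∈ cyl (pre n x) ↔ ∀ i < n, y i = x i := by
  constructor
  · intro hy i hi
    have := hy i (by simpa using hi)
    simpa [List.get_eq_getElem] using this
  · intro hy i hi
    have hi' : i < n := by simpa using hi
    rw [pre_get]; exact hy i hi'

lemma self_mem_cyl_pre (n : ℕ) (x : XX) : x ∈ cyl (pre n x) :=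
  mem_cyl_pre_iff.2 fun _ _ => rfl

lemma eq_pre_of_mem_cyl {s : List Bool} {x : XX} (hx : x ∈ cyl s) : s = pre s.length x := by
  apply List.ext_get (by simp)
  intro i h1 h2
  rw [pre_get]
  exact (hx i h1).symm

lemma cyl_mono {s t : List Bool} (hst : s <+: t) : cyl t ⊆ cyl s := by
  intro x hx i hi
  have hlen : s.length ≤ t.length := hst.length_le
  have := hx i (lt_of_lt_of_le hi hlen)
  rw [this]
  exact (List.IsPrefix.getElem hst hi).symm

lemma pre_prefix_pre {m n : ℕ} (hmn : m ≤ n) (x : XX) : pre m x <+: pre n x := by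
  refine List.prefix_iff_eq_take.2 ?_
  apply List.ext_getElem (by simp [hmn])
  intro i h1 h2
  simp [hmn]

lemma cyl_pre_mono {m n : ℕ} (hmn : m ≤ n) (x : XX) : cyl (pre n x) ⊆ cyl (pre m x) :=
  cyl_mono (pre_prefix_pre hmn x)

lemma isOpen_cyl (s : List Bool) : IsOpen (cyl s) := by
  have : cyl s = ⋂ i : Fin s.length, (fun x : XX => x i) ⁻¹' {s.get i} := by
    ext x; simp [cyl, Set.mem_iInter]
    constructor
    · intro hx i; exact hx i i.2
    · intro hx i hi; exact hx ⟨i, hi⟩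
  rw [this]
  exact isOpen_iInter_of_finite fun i => (continuous_apply (i : ℕ)).isOpen_preimage _ (isOpen_discrete _)

lemma isClosed_cyl (s : List Bool) : IsClosed (cyl s) := by
  have : cyl s = ⋂ i : Fin s.length, (fun x : XX => x i) ⁻¹' {s.get i} := by
    ext x; simp [cyl, Set.mem_iInter]
    constructor
    · intro hx i; exact hx i i.2
    · intro hx i hi; exact hx ⟨i, hi⟩
  rw [this]
  exact isClosed_iInter fun i => IsClosed.preimage (continuous_apply (i : ℕ)) (isClosed_discrete _)

/-- the basis lemma: every open set containing x contains a cylinder around x -/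
lemma exists_cyl_subset {U : Set XX} (hU : IsOpen U) {x : XX} (hx : x ∈ U) :
    ∃ n : ℕ, cyl (pre n x) ⊆ U := by
  obtain ⟨I, u, hIu, hsub⟩ := isOpen_pi_iff.1 hU x hx
  rcases I.eq_empty_or_nonempty with rfl | hne
  · exact ⟨0, fun y _ => hsub (by simp)⟩
  · obtain ⟨N, hN⟩ := I.exists_le
    refine ⟨N + 1, fun y hy => hsub ?_⟩
    intro i hi
    have : y i = x i := mem_cyl_pre_iff.1 hy i (Nat.lt_succ_of_le (hN i hi))
    rw [this]; exact (hIu i hi).2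

/-- append a string in front of a sequence -/
def app (s : List Bool) (x : XX) : XX :=
  fun i => if h : i < s.length then s.get ⟨i, h⟩ else x (i - s.length)

def drp (n : ℕ) (x : XX) : XX := fun i => x (n + i)

lemma app_mem_cyl (s : List Bool) (x : XX) : app s x ∈ cyl s := by
  intro i hi; simp [app, hi]

@[simp] lemma drp_app (s : List Bool) (x : XX) : drp s.length (app s x) = x := by
  funext i
  simp [drp, app]

lemma app_drp {s : List Bool} {x : XX} (hx : x ∈ cyl s) : app s (drp s.length x) = x := by
  funext i
  by_cases h : i < s.length
  · have := hx i h
    simp only [List.get_eq_getElem] at this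
    simp [app, h, this]
  · simp only [app, h, dif_neg, not_false_iff, drp]
    congr 1
    omega

lemma continuous_app_drp (t : List Bool) (n : ℕ) :
    Continuous (fun x : XX => app t (drp n x)) := by
  apply continuous_pi
  intro i
  by_cases h : i < t.length
  · simpa [app, h] using continuous_const
  · simpa [app, h, drp] using continuous_apply (n + (i - t.length))

/-- lists of bools with length ≤ n form a finite set -/
lemma finite_len_le (n : ℕ) : {l : List Bool | l.length ≤ n}.Finite := by
  induction n with
  | zero =>
    refine Set.Finite.subset (Set.finite_singleton []) ?_
    intro l hl
    simp only [Set.mem_setOf_eq, Nat.le_zero, List.length_eq_zero_iff] at hl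
    simp [hl]
  | succ n ih =>
    refine Set.Finite.subset (Set.Finite.union (Set.finite_singleton [])
      (Set.Finite.image2 List.cons Set.finite_univ ih)) ?_
    intro l hl
    match l with
    | [] => exact Or.inl rfl
    | b :: l' =>
      refine Or.inr (Set.mem_image2.2 ⟨b, trivial, l', ?_, rfl⟩)
      simpa using Nat.le_of_succ_le_succ (by simpa using hl)

end KR

noncomputable section KR2

def cells (A : Set XX) : Set (List Bool) :=
  {s | s ≠ [] ∧ cyl s ∩ A = ∅ ∧ (cyl s.dropLast ∩ A).Nonempty}

lemma dropLast_pre (n : ℕ) (x : XX) : (pre (n + 1) x).dropLast = pre n x := by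
  apply List.ext_getElem (by simp)
  intro i h1 h2
  simp [List.getElem_dropLast]

lemma dropLast_pre' (n : ℕ) (hn : 0 < n) (x : XX) : (pre n x).dropLast = pre (n - 1) x := by
  obtain ⟨m, rfl⟩ : ∃ m, n = m + 1 := ⟨n - 1, by omega⟩
  simpa using dropLast_pre m x

lemma cells_unique_aux {A : Set XX} {s t : List Bool} (hs : s ∈ cells A) (ht : t ∈ cells A)
    {x : XX} (hxs : x ∈ cyl s) (hxt : x ∈ cyl t) (hlen : s.length ≤ t.length) : s = t := by
  rcases eq_or_lt_of_le hlen with heq | hlt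
  · rw [eq_pre_of_mem_cyl hxs, eq_pre_of_mem_cyl hxt, heq]
  · exfalso
    have htne : t ≠ [] := ht.1
    have htl : t.length - 1 + 1 = t.length := Nat.succ_pred_eq_of_pos (List.length_pos_iff.2 htne)
    have hdrop : t.dropLast = pre (t.length - 1) x := by
      have h0 : t = pre t.length x := eq_pre_of_mem_cyl hxt
      calc t.dropLast = (pre t.length x).dropLast := by rw [← h0]
        _ = pre (t.length - 1) x := dropLast_pre' _ (List.length_pos_iff.2 htne) x
    have hsub : cyl t.dropLast ⊆ cyl s := by
      rw [hdrop, eq_pre_of_mem_cyl hxs]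
      exact cyl_pre_mono (by omega) x
    obtain ⟨a, ha1, ha2⟩ := ht.2.2
    have : a ∈ cyl s ∩ A := ⟨hsub ha1, ha2⟩
    rw [hs.2.1] at this
    exact this

lemma cells_unique {A : Set XX} {s t : List Bool} (hs : s ∈ cells A) (ht : t ∈ cells A)
    {x : XX} (hxs : x ∈ cyl s) (hxt : x ∈ cyl t) : s = t := by
  rcases le_total s.length t.length with hl | hl
  · exact cells_unique_aux hs ht hxs hxt hl
  · exact (cells_unique_aux ht hs hxt hxs hl).symm

lemma cyl_nil : cyl ([] : List Bool) = Set.univ := by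
  ext x; simp [cyl]

lemma exists_cell {A : Set XX} (hA : IsClosed A) (hAne : A.Nonempty) {x : XX} (hx : x ∉ A) :
    ∃ s ∈ cells A, x ∈ cyl s := by
  have hex : ∃ n, cyl (pre n x) ∩ A = ∅ := by
    obtain ⟨n, hn⟩ := exists_cyl_subset hA.isOpen_compl (show x ∈ Aᶜ from hx)
    exact ⟨n, by rw [Set.eq_empty_iff_forall_notMem]; intro y ⟨hy1, hy2⟩; exact hn hy1 hy2⟩
  classical
  let n := Nat.find hex
  have hn : cyl (pre n x) ∩ A = ∅ := Nat.find_spec hex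
  have hnpos : 0 < n := by
    rcases Nat.eq_zero_or_pos n with h | h
    · exfalso
      have : cyl (pre 0 x) ∩ A = ∅ := by rw [← h]; exact hn
      simp only [pre, List.ofFn_zero] at this
      rw [cyl_nil, Set.univ_inter] at this
      exact hAne.ne_empty this
    · exact h
  refine ⟨pre n x, ⟨?_, hn, ?_⟩, self_mem_cyl_pre n x⟩
  · intro hnil
    have := congrArg List.length hnil
    simp at this; omega
  · have hmin : ¬ (cyl (pre (n - 1) x) ∩ A = ∅) := Nat.find_min hex (by omega)
    rw [show n = (n-1)+1 from by omega, dropLast_pre]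
    exact Set.nonempty_iff_ne_empty.2 hmin

lemma exists_cell_in {A : Set XX} (hA : IsClosed A) (hAnd : IsNowhereDense A)
    (hAne : A.Nonempty) {a : XX} (ha : a ∈ A) (n : ℕ) :
    ∃ s ∈ cells A, cyl s ⊆ cyl (pre n a) ∧ n < s.length := by
  have hint : interior A = ∅ := by
    have := hAnd
    rwa [IsNowhereDense, hA.closure_eq] at this
  have : ¬ (cyl (pre n a) ⊆ A) := by
    intro hsub
    have : cyl (pre n a) ⊆ interior A :=
      interior_maximal hsub (isOpen_cyl _) |>.trans (le_refl _)
    rw [hint] at this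
    exact this (self_mem_cyl_pre n a)
  obtain ⟨x, hx1, hx2⟩ := Set.not_subset.1 this
  obtain ⟨s, hs, hxs⟩ := exists_cell hA hAne hx2
  have hxa : ∀ i < n, x i = a i := mem_cyl_pre_iff.1 hx1
  have hns : n < s.length := by
    by_contra hle
    push_neg at hle
    have hacyl : a ∈ cyl s := by
      rw [eq_pre_of_mem_cyl hxs]
      rw [mem_cyl_pre_iff]
      intro i hi
      exact (hxa i (lt_of_lt_of_le hi hle)).symm
    have : a ∈ cyl s ∩ A := ⟨hacyl, ha⟩
    rw [hs.2.1] at this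
    exact this
  refine ⟨s, hs, ?_, hns⟩
  have h1 : cyl s ⊆ cyl (pre n x) := by
    rw [eq_pre_of_mem_cyl hxs]
    exact cyl_pre_mono (le_of_lt hns) x
  have h2 : pre n x = pre n a := by
    apply List.ext_getElem (by simp)
    intro i hi1 hi2
    simp only [pre_getElem]
    exact hxa i (by simpa using hi1)
  rwa [h2] at h1

lemma infinite_cells_in {A : Set XX} (hA : IsClosed A) (hAnd : IsNowhereDense A)
    (hAne : A.Nonempty) {a : XX} (ha : a ∈ A) (n : ℕ) :
    {s | s ∈ cells A ∧ cyl s ⊆ cyl (pre n a)}.Infinite := by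
  intro hfin
  have himg : (List.length '' {s | s ∈ cells A ∧ cyl s ⊆ cyl (pre n a)}).Finite :=
    hfin.image _
  obtain ⟨L, hL⟩ := himg.bddAbove
  obtain ⟨s, hs, hsub, hlen⟩ := exists_cell_in hA hAnd hAne ha (max n L)
  have hmem : s ∈ {s | s ∈ cells A ∧ cyl s ⊆ cyl (pre n a)} :=
    ⟨hs, hsub.trans (cyl_pre_mono (le_max_left _ _) a)⟩
  have : s.length ≤ L := hL (Set.mem_image_of_mem _ hmem)
  omega

lemma cells_infinite {A : Set XX} (hA : IsClosed A) (hAnd : IsNowhereDense A)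
    (hAne : A.Nonempty) : (cells A).Infinite := by
  obtain ⟨a, ha⟩ := hAne
  exact Set.Infinite.mono (fun s hs => hs.1) (infinite_cells_in hA hAnd ⟨a, ha⟩ ha 0)

lemma cells_countable (A : Set XX) : (cells A).Countable := Set.to_countable _

/-- anchor: a point of A in the parent cylinder of a cell; the cell cylinder is
close to it -/
lemma cell_anchor {A : Set XX} {s : List Bool} (hs : s ∈ cells A) :
    ∃ a ∈ A, cyl s ⊆ cyl (pre (s.length - 1) a) := by
  obtain ⟨a, ha1, ha2⟩ := hs.2.2
  refine ⟨a, ha2, ?_⟩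
  intro x hx
  rw [mem_cyl_pre_iff]
  intro i hi
  have hil : i < s.length := by omega
  have hx1 : x i = s.get ⟨i, hil⟩ := hx i hil
  have hidrop : i < s.dropLast.length := by
    simp only [List.length_dropLast]; omega
  have ha3 : a i = s.dropLast.get ⟨i, hidrop⟩ := ha1 i hidrop
  rw [hx1, ha3]
  simp [List.getElem_dropLast]

end KR2

noncomputable section KR3

def Good {A : Set XX} (f : A → XX) (m : ℕ) (s t : List Bool) : Prop :=
  ∃ a : A, cyl s ⊆ cyl (pre m (a : XX)) ∧ cyl t ⊆ cyl (pre m (f a))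

lemma Good.mono {A : Set XX} {f : A → XX} {m m' : ℕ} (hmm : m' ≤ m) {s t : List Bool}
    (hg : Good f m s t) : Good f m' s t := by
  obtain ⟨a, h1, h2⟩ := hg
  exact ⟨a, h1.trans (cyl_pre_mono hmm _), h2.trans (cyl_pre_mono hmm _)⟩

variable {P : Type}

/-- iterate a picking function, collecting results in a list -/
def LL (pick : ℕ → List P → P) : ℕ → List P
  | 0 => []
  | (k+1) => LL pick k ++ [pick k (LL pick k)]

lemma mem_LL {pick : ℕ → List P → P} {p : P} : ∀ {k : ℕ},
    p ∈ LL pick k ↔ ∃ i < k, p = pick i (LL pick i) := by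
  intro k
  induction k with
  | zero => simp [LL]
  | succ k ih =>
    simp only [LL, List.mem_append, List.mem_singleton, ih]
    constructor
    · rintro (⟨i, hi, rfl⟩ | rfl)
      · exact ⟨i, by omega, rfl⟩
      · exact ⟨k, by omega, rfl⟩
    · rintro ⟨i, hi, rfl⟩
      rcases Nat.lt_succ_iff_lt_or_eq.1 hi with hi' | rfl
      · exact Or.inl ⟨i, hi', rfl⟩
      · exact Or.inr rfl

lemma mem_map_LL {Q : Type} {pick : ℕ → List P → P} {g : P → Q} {v : Q} {k : ℕ} :
    v ∈ (LL pick k).map g ↔ ∃ i < k, g (pick i (LL pick i)) = v := by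
  simp only [List.mem_map]
  constructor
  · rintro ⟨p, hp, rfl⟩
    obtain ⟨i, hi, rfl⟩ := mem_LL.1 hp
    exact ⟨i, hi, rfl⟩
  · rintro ⟨i, hi, rfl⟩
    exact ⟨_, mem_LL.2 ⟨i, hi, rfl⟩, rfl⟩

section BF

variable {A B : Set XX} (h : A ≃ₜ B) (eA : ℕ ≃ ↥(cells A)) (eB : ℕ ≃ ↥(cells B))

/-- the underlying map of h into the ambient space -/
def fwd (h : A ≃ₜ B) : A → XX := fun a => (h a : XX)

/-- specification for the pair chosen at stage `k` -/
def Spec (k : ℕ) (prev : List (↥(cells A) × ↥(cells B))) (p : ↥(cells A) × ↥(cells B)) :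
    Prop :=
  p.1 ∉ prev.map Prod.fst ∧ p.2 ∉ prev.map Prod.snd ∧
  Good (fwd h) (min k (min (p.1.1.length - 1) (p.2.1.length - 1))) p.1.1 p.2.1 ∧
  (k % 2 = 0 → ∃ n, p.1 = eA n ∧ ∀ n' < n, eA n' ∈ prev.map Prod.fst) ∧
  (k % 2 = 1 → ∃ n, p.2 = eB n ∧ ∀ n' < n, eB n' ∈ prev.map Prod.snd)

lemma exists_spec (hA : IsClosed A) (hAnd : IsNowhereDense A)
    (hB : IsClosed B) (hBnd : IsNowhereDense B) (hAne : A.Nonempty) (hBne : B.Nonempty)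
    (k : ℕ) (prev : List (↥(cells A) × ↥(cells B))) :
    ∃ p, Spec h eA eB k prev p := by
  rcases Nat.even_or_odd k with hk | hk
  · -- even stage
    have hk0 : k % 2 = 0 := Nat.even_iff.1 hk
    have hexn : ∃ n, eA n ∉ prev.map Prod.fst := by
      by_contra hcon
      push_neg at hcon
      have hfin : {n : ℕ | eA n ∈ prev.map Prod.fst}.Finite := by
        show ((fun n => eA n) ⁻¹' {p | p ∈ prev.map Prod.fst}).Finite
        apply Set.Finite.preimage (f := fun n => eA n)
        · exact (eA.injective.injOn)
        · exact (prev.map Prod.fst).finite_toSet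
      have : {n : ℕ | eA n ∈ prev.map Prod.fst} = Set.univ :=
        Set.eq_univ_of_forall hcon
      rw [this] at hfin
      exact Set.infinite_univ hfin
    classical
    set n₀ := Nat.find hexn with hn₀
    obtain ⟨a, haA, hanc⟩ := cell_anchor (eA n₀).2
    have hfaB : fwd h ⟨a, haA⟩ ∈ B := (h ⟨a, haA⟩).2
    have hT : {t | t ∈ cells B ∧ cyl t ⊆ cyl (pre k (fwd h ⟨a, haA⟩))}.Infinite :=
      infinite_cells_in hB hBnd hBne hfaB k
    have hused : {t : List Bool | t ∈ prev.map (fun p => (p.2 : List Bool))}.Finite :=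
      (prev.map _).finite_toSet
    obtain ⟨t, ⟨htB, htsub⟩, htfresh⟩ := (hT.diff hused).nonempty
    refine ⟨(eA n₀, ⟨t, htB⟩), ?_, ?_, ?_, ?_, ?_⟩
    · exact Nat.find_spec hexn
    · intro hmem
      apply htfresh
      obtain ⟨p, hp, hpt⟩ := List.mem_map.1 hmem
      exact List.mem_map.2 ⟨p, hp, congrArg Subtype.val hpt⟩
    · refine ⟨⟨a, haA⟩, ?_, ?_⟩
      · exact hanc.trans (cyl_pre_mono (le_trans (min_le_right _ _) (min_le_left _ _)) a)
      · exact htsub.trans (cyl_pre_mono (by omega) _)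
    · intro _
      refine ⟨n₀, rfl, fun n' hn' => ?_⟩
      have := Nat.find_min hexn hn'
      simpa using this
    · intro hk1; omega
  · -- odd stage
    have hk1 : k % 2 = 1 := Nat.odd_iff.1 hk
    have hexn : ∃ n, eB n ∉ prev.map Prod.snd := by
      by_contra hcon
      push_neg at hcon
      have hfin : {n : ℕ | eB n ∈ prev.map Prod.snd}.Finite := by
        show ((fun n => eB n) ⁻¹' {p | p ∈ prev.map Prod.snd}).Finite
        apply Set.Finite.preimage (f := fun n => eB n)
        · exact (eB.injective.injOn)
        · exact (prev.map Prod.snd).finite_toSet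
      have : {n : ℕ | eB n ∈ prev.map Prod.snd} = Set.univ :=
        Set.eq_univ_of_forall hcon
      rw [this] at hfin
      exact Set.infinite_univ hfin
    classical
    set n₀ := Nat.find hexn with hn₀
    obtain ⟨b, hbB, hanc⟩ := cell_anchor (eB n₀).2
    set a : A := h.symm ⟨b, hbB⟩ with ha
    have hfab : fwd h a = b := by
      simp only [fwd, ha]
      rw [h.apply_symm_apply]
    have hT : {s | s ∈ cells A ∧ cyl s ⊆ cyl (pre k (a : XX))}.Infinite :=
      infinite_cells_in hA hAnd hAne a.2 k
    have hused : {s : List Bool | s ∈ prev.map (fun p => (p.1 : List Bool))}.Finite :=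
      (prev.map _).finite_toSet
    obtain ⟨s, ⟨hsA, hssub⟩, hsfresh⟩ := (hT.diff hused).nonempty
    refine ⟨(⟨s, hsA⟩, eB n₀), ?_, ?_, ?_, ?_, ?_⟩
    · intro hmem
      apply hsfresh
      obtain ⟨p, hp, hpt⟩ := List.mem_map.1 hmem
      exact List.mem_map.2 ⟨p, hp, congrArg Subtype.val hpt⟩
    · exact Nat.find_spec hexn
    · refine ⟨a, ?_, ?_⟩
      · exact hssub.trans (cyl_pre_mono (by omega) _)
      · rw [hfab]
        exact hanc.trans (cyl_pre_mono (le_trans (min_le_right _ _) (min_le_right _ _)) b)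
    · intro hk0; omega
    · intro _
      refine ⟨n₀, rfl, fun n' hn' => ?_⟩
      have := Nat.find_min hexn hn'
      simpa using this

end BF

end KR3

noncomputable section KR4

lemma exists_matching {A B : Set XX} (hA : IsClosed A) (hAnd : IsNowhereDense A)
    (hB : IsClosed B) (hBnd : IsNowhereDense B) (h : A ≃ₜ B) (hAne : A.Nonempty) :
    ∃ π : ↥(cells A) → ↥(cells B), Function.Bijective π ∧
      ∀ m : ℕ, {s : ↥(cells A) | ¬ Good (fwd h) m s.1 (π s).1}.Finite := by
  classical
  have hBne : B.Nonempty := by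
    obtain ⟨a, ha⟩ := hAne
    exact ⟨h ⟨a, ha⟩, (h ⟨a, ha⟩).2⟩
  haveI : Infinite ↥(cells A) := (cells_infinite hA hAnd hAne).to_subtype
  haveI : Infinite ↥(cells B) := (cells_infinite hB hBnd hBne).to_subtype
  obtain ⟨eA⟩ : Nonempty (ℕ ≃ ↥(cells A)) := nonempty_equiv_of_countable
  obtain ⟨eB⟩ : Nonempty (ℕ ≃ ↥(cells B)) := nonempty_equiv_of_countable
  choose pick hpick using exists_spec h eA eB hA hAnd hB hBnd hAne hBne
  set q : ℕ → ↥(cells A) × ↥(cells B) := fun k => pick k (LL pick k) with hq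
  have hspec : ∀ k, Spec h eA eB k (LL pick k) (q k) := fun k => hpick k (LL pick k)
  have fst_ne : ∀ {i j : ℕ}, i < j → (q i).1 ≠ (q j).1 := by
    intro i j hij heq
    exact (hspec j).1 (mem_map_LL.2 ⟨i, hij, heq⟩)
  have snd_ne : ∀ {i j : ℕ}, i < j → (q i).2 ≠ (q j).2 := by
    intro i j hij heq
    exact (hspec j).2.1 (mem_map_LL.2 ⟨i, hij, heq⟩)
  have fst_inj : Function.Injective fun k => (q k).1 := by
    intro i j hij
    rcases lt_trichotomy i j with hlt | rfl | hlt
    · exact absurd hij (fst_ne hlt)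
    · rfl
    · exact absurd hij.symm (fst_ne hlt)
  have snd_inj : Function.Injective fun k => (q k).2 := by
    intro i j hij
    rcases lt_trichotomy i j with hlt | rfl | hlt
    · exact absurd hij (snd_ne hlt)
    · rfl
    · exact absurd hij.symm (snd_ne hlt)
  have claimA : ∀ j, ∀ n < j, ∃ i < 2*j, (q i).1 = eA n := by
    intro j
    induction j with
    | zero => intro n hn; omega
    | succ j ih =>
      intro n hn
      obtain ⟨n₀, hq0, hmin⟩ := (hspec (2*j)).2.2.2.1 (by omega)
      rcases lt_trichotomy n n₀ with hlt | rfl | hgt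
      · obtain ⟨i, hi, hqi⟩ := mem_map_LL.1 (hmin n hlt)
        exact ⟨i, by omega, hqi⟩
      · rcases Nat.lt_succ_iff_lt_or_eq.1 hn with hn' | rfl
        · obtain ⟨i, hi, hqi⟩ := ih n hn'
          exact ⟨i, by omega, hqi⟩
        · exact ⟨2*n, by omega, hq0⟩
      · rcases Nat.lt_succ_iff_lt_or_eq.1 hn with hn' | rfl
        · obtain ⟨i, hi, hqi⟩ := ih n hn'
          exact ⟨i, by omega, hqi⟩
        · exfalso
          obtain ⟨i, hi, hqi⟩ := ih n₀ hgt
          exact (hspec (2*n)).1 (mem_map_LL.2 ⟨i, hi, hqi.trans hq0.symm⟩)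
  have claimB : ∀ j, ∀ n < j, ∃ i < 2*j+1, (q i).2 = eB n := by
    intro j
    induction j with
    | zero => intro n hn; omega
    | succ j ih =>
      intro n hn
      obtain ⟨n₀, hq0, hmin⟩ := (hspec (2*j+1)).2.2.2.2 (by omega)
      rcases lt_trichotomy n n₀ with hlt | rfl | hgt
      · obtain ⟨i, hi, hqi⟩ := mem_map_LL.1 (hmin n hlt)
        exact ⟨i, by omega, hqi⟩
      · rcases Nat.lt_succ_iff_lt_or_eq.1 hn with hn' | rfl
        · obtain ⟨i, hi, hqi⟩ := ih n hn'
          exact ⟨i, by omega, hqi⟩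
        · exact ⟨2*n+1, by omega, hq0⟩
      · rcases Nat.lt_succ_iff_lt_or_eq.1 hn with hn' | rfl
        · obtain ⟨i, hi, hqi⟩ := ih n hn'
          exact ⟨i, by omega, hqi⟩
        · exfalso
          obtain ⟨i, hi, hqi⟩ := ih n₀ hgt
          exact (hspec (2*n+1)).2.1 (mem_map_LL.2 ⟨i, hi, hqi.trans hq0.symm⟩)
  have surjA : ∀ s : ↥(cells A), ∃ k, (q k).1 = s := by
    intro s
    obtain ⟨i, _, hi⟩ := claimA (eA.symm s + 1) (eA.symm s) (by omega)
    exact ⟨i, by rw [hi, eA.apply_symm_apply]⟩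
  have surjB : ∀ t : ↥(cells B), ∃ k, (q k).2 = t := by
    intro t
    obtain ⟨i, _, hi⟩ := claimB (eB.symm t + 1) (eB.symm t) (by omega)
    exact ⟨i, by rw [hi, eB.apply_symm_apply]⟩
  choose idx hidx using surjA
  set π : ↥(cells A) → ↥(cells B) := fun s => (q (idx s)).2 with hπ
  have π_inj : Function.Injective π := by
    intro s s' hss
    have : idx s = idx s' := snd_inj hss
    rw [← hidx s, ← hidx s', this]
  have π_surj : Function.Surjective π := by
    intro t
    obtain ⟨k, hk⟩ := surjB t
    refine ⟨(q k).1, ?_⟩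
    have hik : idx ((q k).1) = k := fst_inj (hidx ((q k).1))
    rw [hπ]
    simp only
    rw [hik, hk]
  refine ⟨π, ⟨π_inj, π_surj⟩, ?_⟩
  intro m
  have idx_inj : Function.Injective idx := by
    intro s s' hss
    rw [← hidx s, ← hidx s', hss]
  have hfin1 : (idx ⁻¹' Set.Iio m).Finite :=
    Set.Finite.preimage idx_inj.injOn (Set.finite_Iio m)
  have hfin2 : ((Subtype.val : ↥(cells A) → List Bool) ⁻¹' {l | l.length ≤ m}).Finite :=
    Set.Finite.preimage Subtype.val_injective.injOn (finite_len_le m)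
  have hfin3 : (π ⁻¹' ((Subtype.val : ↥(cells B) → List Bool) ⁻¹' {l | l.length ≤ m})).Finite :=
    Set.Finite.preimage π_inj.injOn
      (Set.Finite.preimage Subtype.val_injective.injOn (finite_len_le m))
  refine Set.Finite.subset ((hfin1.union hfin2).union hfin3) ?_
  intro s hs
  by_contra hcon
  simp only [Set.mem_union, Set.mem_preimage, Set.mem_Iio, Set.mem_setOf_eq, not_or, not_lt,
    not_le] at hcon
  obtain ⟨⟨h1, h2⟩, h3⟩ := hcon
  apply hs
  have hg := (hspec (idx s)).2.2.1
  have hq1 : (q (idx s)).1 = s := hidx s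
  have hq2 : (q (idx s)).2 = π s := rfl
  rw [hq1, hq2] at hg
  exact hg.mono (by omega)

end KR4

noncomputable section KR5

lemma continuousAt_of_cyl {g : XX → XX} {x₀ : XX}
    (H : ∀ m, ∀ᶠ x in nhds x₀, g x ∈ cyl (pre m (g x₀))) : ContinuousAt g x₀ := by
  rw [ContinuousAt, Filter.tendsto_def]
  intro U hU
  obtain ⟨V, hVU, hVopen, hgV⟩ := mem_nhds_iff.1 hU
  obtain ⟨m, hm⟩ := exists_cyl_subset hVopen hgV
  exact Filter.mem_of_superset (H m) (fun x hx => hVU (hm hx))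

lemma notMem_of_mem_cell {A : Set XX} {s : List Bool} (hs : s ∈ cells A) {x : XX}
    (hx : x ∈ cyl s) : x ∉ A := by
  intro hxA
  have : x ∈ cyl s ∩ A := ⟨hx, hxA⟩
  rw [hs.2.1] at this
  exact this

/-- continuity of the subtype map at a point, cylinder version -/
lemma subtype_cont_cyl {A B : Set XX} (h : A ≃ₜ B) (a₀ : A) (m : ℕ) :
    ∃ M, m ≤ M ∧ ∀ a : A, (a : XX) ∈ cyl (pre M (a₀ : XX)) →
      fwd h a ∈ cyl (pre m (fwd h a₀)) := by
  have hcont : Continuous (fwd h) := continuous_subtype_val.comp h.continuous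
  have hU : (fwd h) ⁻¹' (cyl (pre m (fwd h a₀))) ∈ nhds a₀ :=
    hcont.continuousAt.preimage_mem_nhds
      ((isOpen_cyl _).mem_nhds (self_mem_cyl_pre _ _))
  rw [nhds_subtype_eq_comap, Filter.mem_comap] at hU
  obtain ⟨U, hU1, hU2⟩ := hU
  obtain ⟨V, hVU, hVopen, haV⟩ := mem_nhds_iff.1 hU1
  obtain ⟨M, hM⟩ := exists_cyl_subset hVopen haV
  refine ⟨max M m, le_max_right _ _, fun a ha => ?_⟩
  have : (a : XX) ∈ cyl (pre M (a₀ : XX)) :=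
    cyl_pre_mono (le_max_left _ _) _ ha
  exact hU2 (show (a : XX) ∈ U from hVU (hM this))

theorem extend_homeomorph_nowhereDense'
    (A B : Set XX) (hA : IsClosed A) (hAnd : IsNowhereDense A)
    (hB : IsClosed B) (hBnd : IsNowhereDense B)
    (h : A ≃ₜ B) :
    ∃ H : XX ≃ₜ XX, ∀ a : A, H a = (h a : XX) := by
  classical
  rcases A.eq_empty_or_nonempty with rfl | hAne
  · exact ⟨Homeomorph.refl _, fun a => absurd a.2 (Set.notMem_empty _)⟩
  have hBne : B.Nonempty := by
    obtain ⟨a, ha⟩ := hAne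
    exact ⟨h ⟨a, ha⟩, (h ⟨a, ha⟩).2⟩
  obtain ⟨π, hπbij, hπgood⟩ := exists_matching hA hAnd hB hBnd h hAne
  set e : ↥(cells A) ≃ ↥(cells B) := Equiv.ofBijective π hπbij with he
  have heπ : ∀ s, e s = π s := fun s => rfl
  -- cell selections
  have hcellA : ∀ x : XX, x ∉ A → ∃ s : ↥(cells A), x ∈ cyl s.1 := by
    intro x hx
    obtain ⟨s, hs, hmem⟩ := exists_cell hA hAne hx
    exact ⟨⟨s, hs⟩, hmem⟩
  have hcellB : ∀ y : XX, y ∉ B → ∃ t : ↥(cells B), y ∈ cyl t.1 := by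
    intro y hy
    obtain ⟨t, ht, hmem⟩ := exists_cell hB hBne hy
    exact ⟨⟨t, ht⟩, hmem⟩
  choose cA hcA using hcellA
  choose cB hcB using hcellB
  set F : XX → XX := fun x =>
    if hx : x ∈ A then fwd h ⟨x, hx⟩
    else app (π (cA x hx)).1 (drp (cA x hx).1.length x) with hF
  set G : XX → XX := fun y =>
    if hy : y ∈ B then (h.symm ⟨y, hy⟩ : XX)
    else app (e.symm (cB y hy)).1 (drp (cB y hy).1.length y) with hG
  have hFA : ∀ (x : XX) (hx : x ∈ A), F x = fwd h ⟨x, hx⟩ := by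
    intro x hx; rw [hF]; simp only [dif_pos hx]
  have hFnA : ∀ (x : XX) (hx : x ∉ A), F x = app (π (cA x hx)).1 (drp (cA x hx).1.length x) := by
    intro x hx; rw [hF]; simp only [dif_neg hx]
  have hGB : ∀ (y : XX) (hy : y ∈ B), G y = (h.symm ⟨y, hy⟩ : XX) := by
    intro y hy; rw [hG]; simp only [dif_pos hy]
  have hGnB : ∀ (y : XX) (hy : y ∉ B),
      G y = app (e.symm (cB y hy)).1 (drp (cB y hy).1.length y) := by
    intro y hy; rw [hG]; simp only [dif_neg hy]
  -- behaviour of F off A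
  have hFmem : ∀ (x : XX) (hx : x ∉ A), F x ∈ cyl (π (cA x hx)).1 := by
    intro x hx; rw [hFnA x hx]; exact app_mem_cyl _ _
  have hFnB : ∀ (x : XX) (hx : x ∉ A), F x ∉ B := by
    intro x hx
    exact notMem_of_mem_cell (π (cA x hx)).2 (hFmem x hx)
  have hGmem : ∀ (y : XX) (hy : y ∉ B), G y ∈ cyl (e.symm (cB y hy)).1 := by
    intro y hy; rw [hGnB y hy]; exact app_mem_cyl _ _
  have hGnA : ∀ (y : XX) (hy : y ∉ B), G y ∉ A := by
    intro y hy
    exact notMem_of_mem_cell (e.symm (cB y hy)).2 (hGmem y hy)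
  -- G ∘ F = id
  have hGF : ∀ x, G (F x) = x := by
    intro x
    by_cases hx : x ∈ A
    · rw [hFA x hx]
      have hmem : fwd h ⟨x, hx⟩ ∈ B := (h ⟨x, hx⟩).2
      rw [hGB _ hmem]
      have : (⟨fwd h ⟨x, hx⟩, hmem⟩ : B) = h ⟨x, hx⟩ := rfl
      rw [this, h.symm_apply_apply]
    · have hFx := hFnB x hx
      rw [hGnB _ hFx]
      have hcBF : cB (F x) hFx = π (cA x hx) := by
        have h1 := hcB (F x) hFx
        have h2 := hFmem x hx
        exact Subtype.ext (cells_unique (cB (F x) hFx).2 (π (cA x hx)).2 h1 h2)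
      rw [hcBF]
      have hsymm : e.symm (π (cA x hx)) = cA x hx := by
        rw [← heπ]; exact e.symm_apply_apply _
      rw [hsymm]
      have hdrp : drp (π (cA x hx)).1.length (F x) = drp (cA x hx).1.length x := by
        rw [hFnA x hx, drp_app]
      rw [hdrp]
      exact app_drp (hcA x hx)
  -- F ∘ G = id
  have hFG : ∀ y, F (G y) = y := by
    intro y
    by_cases hy : y ∈ B
    · rw [hGB y hy]
      have hmem : (h.symm ⟨y, hy⟩ : XX) ∈ A := (h.symm ⟨y, hy⟩).2
      rw [hFA _ hmem]
      have : (⟨(h.symm ⟨y, hy⟩ : XX), hmem⟩ : A) = h.symm ⟨y, hy⟩ := rfl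
      rw [fwd, this, h.apply_symm_apply]
    · have hGy := hGnA y hy
      rw [hFnA _ hGy]
      have hcAG : cA (G y) hGy = e.symm (cB y hy) := by
        have h1 := hcA (G y) hGy
        have h2 := hGmem y hy
        exact Subtype.ext (cells_unique (cA (G y) hGy).2 (e.symm (cB y hy)).2 h1 h2)
      rw [hcAG]
      have hsymm : π (e.symm (cB y hy)) = cB y hy := by
        rw [← heπ]; exact e.apply_symm_apply _
      rw [hsymm]
      have hdrp : drp (e.symm (cB y hy)).1.length (G y) = drp (cB y hy).1.length y := by
        rw [hGnB y hy, drp_app]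
      rw [hdrp]
      exact app_drp (hcB y hy)
  set E : XX ≃ XX := ⟨F, G, hGF, hFG⟩ with hE
  -- continuity of F
  have hFcont : Continuous F := by
    rw [continuous_iff_continuousAt]
    intro x₀
    by_cases hx₀ : x₀ ∈ A
    · -- at a point of A
      apply continuousAt_of_cyl
      intro m
      rw [hFA x₀ hx₀]
      obtain ⟨M, hmM, hM⟩ := subtype_cont_cyl h ⟨x₀, hx₀⟩ m
      obtain ⟨Lb, hLb⟩ := ((hπgood M).image (fun s => s.1.length)).bddAbove
      set N := max M Lb + 1 with hN
      have hNM : M ≤ N := by omega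
      have hnbhd : cyl (pre N x₀) ∈ nhds x₀ :=
        (isOpen_cyl _).mem_nhds (self_mem_cyl_pre _ _)
      refine Filter.mem_of_superset hnbhd ?_
      intro x hxN
      show F x ∈ cyl (pre m (fwd h ⟨x₀, hx₀⟩))
      by_cases hx : x ∈ A
      · rw [hFA x hx]
        exact hM ⟨x, hx⟩ (cyl_pre_mono hNM _ hxN)
      · -- x in a cell
        set s := cA x hx with hs
        have hxs := hcA x hx
        have hxag : ∀ i < N, x i = x₀ i := mem_cyl_pre_iff.1 hxN
        have hlen : N < s.1.length := by
          by_contra hle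
          push_neg at hle
          have : x₀ ∈ cyl s.1 := by
            rw [eq_pre_of_mem_cyl hxs, mem_cyl_pre_iff]
            intro i hi
            exact (hxag i (lt_of_lt_of_le hi hle)).symm
          exact notMem_of_mem_cell s.2 this hx₀
        have hgood : Good (fwd h) M s.1 (π s).1 := by
          by_contra hbad
          have : s.1.length ≤ Lb :=
            hLb (Set.mem_image_of_mem _ (show s ∈ {s | ¬ Good (fwd h) M s.1 (π s).1} from hbad))
          omega
        obtain ⟨a', hsub1, hsub2⟩ := hgood
        have hxa' : ∀ i < M, x i = (a' : XX) i := mem_cyl_pre_iff.1 (hsub1 hxs)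
        have ha'x₀ : (a' : XX) ∈ cyl (pre M x₀) := by
          rw [mem_cyl_pre_iff]
          intro i hi
          rw [← hxa' i hi]
          exact hxag i (by omega)
        have hha' : ∀ i < m, fwd h a' i = fwd h ⟨x₀, hx₀⟩ i :=
          mem_cyl_pre_iff.1 (hM a' ha'x₀)
        have hFxmem : ∀ i < M, F x i = fwd h a' i :=
          mem_cyl_pre_iff.1 (hsub2 (hFmem x hx))
        show F x ∈ cyl (pre m (fwd h ⟨x₀, hx₀⟩))
        rw [mem_cyl_pre_iff]
        intro i hi
        rw [hFxmem i (by omega), hha' i hi]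
    · -- at a point of the complement
      have hs := hcA x₀ hx₀
      set s := cA x₀ hx₀ with hsdef
      have hev : ∀ᶠ x in nhds x₀, F x = app (π s).1 (drp s.1.length x) := by
        refine Filter.mem_of_superset ((isOpen_cyl s.1).mem_nhds hs) ?_
        intro x hxs
        have hx : x ∉ A := notMem_of_mem_cell s.2 hxs
        have : cA x hx = s :=
          Subtype.ext (cells_unique (cA x hx).2 s.2 (hcA x hx) hxs)
        show F x = app (π s).1 (drp s.1.length x)
        rw [hFnA x hx, this]
      exact ((continuous_app_drp (π s).1 s.1.length).continuousAt).congr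
        (Filter.EventuallyEq.symm hev)
  refine ⟨Continuous.homeoOfEquivCompactToT2 (f := E) hFcont, fun a => ?_⟩
  show F (a : XX) = (h a : XX)
  rw [hFA (a : XX) a.2]
  rfl

end KR5

/-- Every homeomorphism between two closed nowhere dense subsets of the Cantor
set extends to a homeomorphism of the Cantor set onto itself. -/
theorem extend_homeomorph_nowhereDense
    (A B : Set (ℕ → Bool)) (hA : IsClosed A) (hAnd : IsNowhereDense A)
    (hB : IsClosed B) (hBnd : IsNowhereDense B)
    (h : A ≃ₜ B) :
    ∃ H : (ℕ → Bool) ≃ₜ (ℕ → Bool), ∀ a : A, H a = (h a : ℕ → Bool) := by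
  exact extend_homeomorph_nowhereDense' A B hA hAnd hB hBnd h
end

section
/- Assume MA(countable): every countable partial order and every family of fewer than 𝔠 dense subsets admits a filter meeting all of them (equivalently, 2^ω is not the union of fewer than 𝔠 nowhere dense sets). Then tf(C) = 𝔠, i.e., every transitive family of continuous self-maps of the Cantor set has cardinality at least 𝔠, and a transitive family of cardinality 𝔠 exists. -/
open Cardinal

/-- Singletons in the Cantor set have empty interior. -/
lemma interior_singleton_cantor (z : ℕ → Bool) : interior ({z} : Set (ℕ → Bool)) = ∅ := by
  by_contra h
  obtain ⟨x, hx⟩ := Set.nonempty_iff_ne_empty.mpr h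
  have hxz : x ∈ ({z} : Set (ℕ → Bool)) := interior_subset hx
  rw [Set.mem_singleton_iff] at hxz
  subst hxz
  have hmem : {x} ∈ nhds x := mem_interior_iff_mem_nhds.mp hx
  rw [nhds_pi, Filter.mem_pi] at hmem
  obtain ⟨I, hI, t, ht, hsub⟩ := hmem
  obtain ⟨n, hn⟩ := hI.infinite_compl.nonempty
  have hu : Function.update x n (!x n) ∈ I.pi t := by
    intro i hi
    rw [Function.update_of_ne (by rintro rfl; exact hn hi)]
    simpa [nhds_discrete, Filter.mem_pure] using ht i
  have := hsub hu
  simp only [Set.mem_singleton_iff] at this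
  have := congrFun this n
  simp [Function.update_self] at this

/-- Union of two closed sets with empty interior has empty interior. -/
lemma interior_union_empty {X : Type*} [TopologicalSpace X] {A B : Set X}
    (hA : IsClosed A) (hAi : interior A = ∅) (hBi : interior B = ∅) :
    interior (A ∪ B) = ∅ := by
  rw [Set.eq_empty_iff_forall_notMem]
  intro x hx
  set U := interior (A ∪ B) with hU
  have hUopen : IsOpen U := isOpen_interior
  have hdiff : U \ A ⊆ interior B := by
    apply interior_maximal
    · intro w hw
      rcases interior_subset hw.1 with h | h
      · exact absurd h hw.2
      · exact h
    · exact hUopen.sdiff hA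
  have hUA : U ⊆ A := by
    intro w hw
    by_contra hwA
    have : w ∈ interior B := hdiff ⟨hw, hwA⟩
    rw [hBi] at this
    exact this
  have : x ∈ interior A := interior_maximal hUA hUopen hx
  rw [hAi] at this
  exact this

/-- Under MA(countable), in the form that `2^ω` is not the union of fewer than
`𝔠` nowhere dense sets, every transitive family of continuous self-maps of the
Cantor set has cardinality at least `𝔠`, and one of cardinality `𝔠` exists. -/
theorem tf_eq_continuum_of_MA_countable
    (hMA : ∀ G : Set (Set (ℕ → Bool)), (∀ s ∈ G, IsNowhereDense s) →
        ⋃₀ G = Set.univ → Cardinal.continuum ≤ #G) :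
    (∀ F : Set ((ℕ → Bool) → (ℕ → Bool)), (∀ f ∈ F, Continuous f) →
        (∀ x y : ℕ → Bool, ∃ f ∈ F, f x = y ∨ f y = x) →
        Cardinal.continuum ≤ #F) ∧
    (∃ F : Set ((ℕ → Bool) → (ℕ → Bool)), (∀ f ∈ F, Continuous f) ∧
        (∀ x y : ℕ → Bool, ∃ f ∈ F, f x = y ∨ f y = x) ∧
        #F = Cardinal.continuum) := by
  constructor
  · -- lower bound
    intro F hcont htrans
    by_contra hlt
    rw [not_le] at hlt
    -- the set of "bad" targets
    set S : ((ℕ → Bool) → (ℕ → Bool)) → Set (ℕ → Bool) :=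
      fun f => {y | (interior (f ⁻¹' {y})).Nonempty} with hS
    have hScount : ∀ f, (S f).Countable := by
      intro f
      apply Set.PairwiseDisjoint.countable_of_nonempty_interior
        (s := fun y => f ⁻¹' {y})
      · intro y _ y' _ hyy'
        exact Disjoint.preimage f (Set.disjoint_singleton.mpr hyy')
      · intro y hy
        exact hy
    set bad : Set (ℕ → Bool) := ⋃ f ∈ F, S f with hbad
    have hbadlt : #bad < Cardinal.continuum := by
      refine lt_of_le_of_lt ((Cardinal.mk_biUnion_le S F).trans ?_)
        (Cardinal.mul_lt_of_lt Cardinal.aleph0_le_continuum hlt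
          Cardinal.aleph0_lt_continuum)
      apply mul_le_mul' le_rfl
      exact ciSup_le' fun f => (hScount f).le_aleph0
    have hne : bad ≠ Set.univ := by
      intro h
      rw [h] at hbadlt
      rw [Cardinal.mk_univ, mk_cantor] at hbadlt
      exact lt_irrefl _ hbadlt
    obtain ⟨y, hy⟩ := Set.ne_univ_iff_exists_notMem _ |>.mp hne
    -- cover the space by nowhere dense sets indexed by F
    set G : Set (Set (ℕ → Bool)) := (fun f => f ⁻¹' {y} ∪ {f y}) '' F with hG
    have h1 : ∀ s ∈ G, IsNowhereDense s := by
      rintro s ⟨f, hf, rfl⟩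
      have hfc : Continuous f := hcont f hf
      have hclosed : IsClosed (f ⁻¹' {y} ∪ {f y}) :=
        (IsClosed.preimage hfc isClosed_singleton).union isClosed_singleton
      rw [hclosed.isNowhereDense_iff]
      apply interior_union_empty (IsClosed.preimage hfc isClosed_singleton)
      · have : y ∉ S f := by
          intro hySf
          exact hy (Set.mem_biUnion hf hySf)
        exact Set.not_nonempty_iff_eq_empty.mp this
      · exact interior_singleton_cantor (f y)
    have h2 : ⋃₀ G = Set.univ := by
      apply Set.eq_univ_of_forall
      intro x
      obtain ⟨f, hf, hcase⟩ := htrans x y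
      refine Set.mem_sUnion.mpr ⟨f ⁻¹' {y} ∪ {f y}, ⟨f, hf, rfl⟩, ?_⟩
      rcases hcase with h | h
      · exact Or.inl h
      · exact Or.inr h.symm
    have := hMA G h1 h2
    have hGle : #G ≤ #F := Cardinal.mk_image_le
    exact absurd (this.trans hGle) (not_le.mpr hlt)
  · -- existence: the family of constant maps
    refine ⟨Set.range (fun c : ℕ → Bool => Function.const (ℕ → Bool) c), ?_, ?_, ?_⟩
    · rintro f ⟨c, rfl⟩
      exact continuous_const
    · intro x y
      exact ⟨Function.const _ y, ⟨y, rfl⟩, Or.inl rfl⟩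
    · rw [Cardinal.mk_range_eq _ (fun a b h => congrFun h a), mk_cantor]
end

section
/- Let S be an infinite set and F a family of functions from S to S with |F| infinite and |F|⁺⁺ ≤ |S|. Then there exist x, y ∈ S with x ≠ y such that f(x) ≠ y and f(y) ≠ x for all f ∈ F. -/
open Cardinal

/-- A family of functions of infinite size `κ` cannot be transitive on a set of
size at least `κ⁺⁺`. -/
theorem not_transitive_of_card_succ_succ_le {S : Type*} [Infinite S]
    (F : Set (S → S)) (hinf : ℵ₀ ≤ #F)
    (hcard : Order.succ (Order.succ #F) ≤ #S) :
    ∃ x y : S, x ≠ y ∧ ∀ f ∈ F, f x ≠ y ∧ f y ≠ x := by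
  set κ := #F with hκ
  -- the set mapping: images of x under functions in F
  set G : S → Set S := fun x => Set.range (fun f : F => (f : S → S) x) with hG
  have hGcard : ∀ x : S, #(G x) ≤ κ := fun x => Cardinal.mk_range_le
  have hsucc_inf : ℵ₀ ≤ Order.succ κ := hinf.trans (Order.le_succ _)
  -- a set T of size κ⁺
  obtain ⟨T, hT⟩ : ∃ T : Set S, #T = Order.succ κ := by
    have : Order.succ κ ≤ #S := (Order.le_succ _).trans hcard
    exact Cardinal.le_mk_iff_exists_set.mp this
  -- the forbidden set
  set U : Set S := T ∪ ⋃ t : T, G (t : S) with hU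
  have hUcard : #U < #S := by
    have h1 : #(⋃ t : T, G (t : S)) ≤ Order.succ κ := by
      calc #(⋃ t : T, G (t : S)) ≤ #T * ⨆ t : T, #(G (t : S)) :=
            Cardinal.mk_iUnion_le _
        _ ≤ Order.succ κ * Order.succ κ := by
            apply mul_le_mul' (le_of_eq hT)
            exact ciSup_le' fun t => (hGcard t).trans (Order.le_succ _)
        _ = Order.succ κ := Cardinal.mul_eq_self hsucc_inf
    calc #U ≤ #T + #(⋃ t : T, G (t : S)) := Cardinal.mk_union_le _ _
      _ ≤ Order.succ κ + Order.succ κ := add_le_add (le_of_eq hT) h1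
      _ = Order.succ κ := Cardinal.add_eq_self hsucc_inf
      _ < Order.succ (Order.succ κ) := Order.lt_succ _
      _ ≤ #S := hcard
  -- pick x outside U
  obtain ⟨x, hx⟩ : ∃ x : S, x ∉ U := by
    by_contra h
    push_neg at h
    have : U = Set.univ := Set.eq_univ_of_forall h
    rw [this, Cardinal.mk_univ] at hUcard
    exact lt_irrefl _ hUcard
  -- pick t ∈ T not in G x
  obtain ⟨t, htT, htG⟩ : ∃ t ∈ T, t ∉ G x := by
    by_contra h
    push_neg at h
    have hsub : T ⊆ G x := h
    have : Order.succ κ ≤ κ := hT ▸ (Cardinal.mk_le_mk_of_subset hsub).trans (hGcard x)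
    exact absurd this (not_le.mpr (Order.lt_succ κ))
  refine ⟨x, t, ?_, ?_⟩
  · rintro rfl
    exact hx (Set.mem_union_left _ htT)
  · intro f hf
    constructor
    · intro hfx
      exact htG ⟨⟨f, hf⟩, hfx⟩
    · intro hft
      apply hx
      apply Set.mem_union_right
      exact Set.mem_iUnion.mpr ⟨⟨t, htT⟩, ⟨⟨f, hf⟩, hft⟩⟩
end

section
/- Suppose the unit interval [0,1] can be covered by κ many closed nowhere dense sets where κ < 𝔠. Then [0,1] can be covered by κ many Cantor sets (homeomorphic copies of 2^ω) {C_α : α < κ} such that for every two points x, y ∈ [0,1] there exists α with x, y ∈ C_α. -/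
open Cardinal

section CantorAux

open Set Metric MeasureTheory Filter
open scoped ENNReal

noncomputable section

/-! ### A Cantor-type subset of `ℝ`: the range of a ternary series -/

private def cterm (σ : ℕ → Bool) (i : ℕ) : ℝ := (if σ i then 2 else 0) * (3:ℝ)⁻¹ ^ (i+1)

private lemma cterm_nonneg (σ : ℕ → Bool) (i : ℕ) : 0 ≤ cterm σ i := by
  unfold cterm; positivity

private lemma cterm_le (σ : ℕ → Bool) (i : ℕ) : cterm σ i ≤ 2 * (3:ℝ)⁻¹ ^ (i+1) := by
  unfold cterm; gcongr; split <;> norm_num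

private lemma summable_bound : Summable (fun i => 2 * (3:ℝ)⁻¹ ^ (i+1)) := by
  apply Summable.mul_left
  exact (summable_geometric_of_lt_one (by norm_num) (by norm_num)).comp_injective
    (add_left_injective 1)

private lemma cterm_summable (σ : ℕ → Bool) : Summable (cterm σ) :=
  Summable.of_nonneg_of_le (cterm_nonneg σ) (cterm_le σ) summable_bound

private def cfun (σ : ℕ → Bool) : ℝ := ∑' i, cterm σ i

private lemma cfun_nonneg (σ : ℕ → Bool) : 0 ≤ cfun σ :=
  tsum_nonneg (cterm_nonneg σ)

private lemma cfun_continuous : Continuous cfun := by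
  apply continuous_tsum (u := fun i => 2 * (3:ℝ)⁻¹ ^ (i+1))
  · intro i
    have : Continuous fun σ : ℕ → Bool => σ i := continuous_apply i
    exact ((continuous_of_discreteTopology (f := fun b : Bool => ((if b then 2 else 0) : ℝ))).comp
      this).mul continuous_const
  · exact summable_bound
  · intro n σ
    rw [Real.norm_eq_abs, abs_of_nonneg (cterm_nonneg σ n)]
    exact cterm_le σ n

private def CD : Set ℝ := Set.range cfun

private lemma isClosed_CD : IsClosed CD :=
  (isCompact_range cfun_continuous).isClosed

private lemma zero_mem_CD : (0:ℝ) ∈ CD := by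
  refine ⟨fun _ => false, ?_⟩
  unfold cfun cterm
  simp

private lemma CD_nonneg : ∀ t ∈ CD, (0:ℝ) ≤ t := by
  rintro t ⟨σ, rfl⟩; exact cfun_nonneg σ

private lemma tail_bound (n : ℕ) : (∑' i : ℕ, 2 * (3:ℝ)⁻¹ ^ (i + n + 1)) = (3:ℝ)⁻¹ ^ n := by
  have h : ∀ i : ℕ, 2 * (3:ℝ)⁻¹ ^ (i + n + 1) = (2 * (3:ℝ)⁻¹ ^ (n+1)) * (3:ℝ)⁻¹ ^ i := by
    intro i; ring
  rw [tsum_congr h, tsum_mul_left, tsum_geometric_of_lt_one (by norm_num) (by norm_num)]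
  norm_num; ring

private lemma cfun_flip (σ : ℕ → Bool) (n : ℕ) :
    |cfun (Function.update σ n (!σ n)) - cfun σ| = 2 * (3:ℝ)⁻¹ ^ (n+1) := by
  set σ' := Function.update σ n (!σ n) with hσ'
  have hsub : cfun σ' - cfun σ = ∑' i, (cterm σ' i - cterm σ i) := by
    rw [Summable.tsum_sub (cterm_summable σ') (cterm_summable σ)]; rfl
  have hsingle : (∑' i, (cterm σ' i - cterm σ i)) = cterm σ' n - cterm σ n := by
    apply tsum_eq_single
    intro b hb
    have : σ' b = σ b := Function.update_of_ne hb _ σ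
    simp [cterm, this]
  rw [hsub, hsingle]
  have hn : σ' n = !σ n := Function.update_self n _ σ
  cases h : σ n <;>
    simp [cterm, hn, h, abs_of_nonneg, abs_of_nonpos]

/-- Every point of `CD` is an accumulation point of `CD`. -/
private lemma CD_acc (t : ℝ) (ht : t ∈ CD) (ε : ℝ) (hε : 0 < ε) :
    ∃ s ∈ CD, s ≠ t ∧ |s - t| < ε := by
  obtain ⟨σ, rfl⟩ := ht
  obtain ⟨n, hn⟩ : ∃ n : ℕ, 2 * (3:ℝ)⁻¹ ^ (n+1) < ε := by
    obtain ⟨n, hn⟩ := exists_pow_lt_of_lt_one (mul_pos (by norm_num : (0:ℝ) < 1/2) hε)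
      (by norm_num : (3:ℝ)⁻¹ < 1)
    refine ⟨n, ?_⟩
    have : (3:ℝ)⁻¹ ^ (n+1) ≤ (3:ℝ)⁻¹ ^ n := by
      apply pow_le_pow_of_le_one (by norm_num) (by norm_num)
      omega
    nlinarith
  refine ⟨cfun (Function.update σ n (!σ n)), ⟨_, rfl⟩, ?_, ?_⟩
  · intro h
    have := cfun_flip σ n
    rw [h] at this
    simp at this
  · rw [cfun_flip σ n]; exact hn

private def cpre (n : ℕ) (v : Fin n → Bool) : ℝ :=
  ∑ i : Fin n, (if v i then 2 else 0) * (3:ℝ)⁻¹ ^ ((i:ℕ)+1)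

private lemma CD_subset_cover (n : ℕ) :
    CD ⊆ ⋃ v : Fin n → Bool, Icc (cpre n v) (cpre n v + (3:ℝ)⁻¹ ^ n) := by
  rintro x ⟨σ, rfl⟩
  refine mem_iUnion.mpr ⟨fun i => σ i, ?_⟩
  have hpre : cpre n (fun i => σ i) = ∑ i ∈ Finset.range n, cterm σ i := by
    rw [Finset.sum_range]
    rfl
  have hsplit : cfun σ = cpre n (fun i => σ i) + ∑' i, cterm σ (i + n) := by
    rw [cfun, ← Summable.sum_add_tsum_nat_add n (cterm_summable σ), hpre]
  have h0 : 0 ≤ ∑' i, cterm σ (i + n) := tsum_nonneg fun i => cterm_nonneg σ _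
  have h1 : (∑' i, cterm σ (i + n)) ≤ (3:ℝ)⁻¹ ^ n := by
    rw [← tail_bound n]
    exact ((cterm_summable σ).comp_injective
      (add_left_injective n)).tsum_le_tsum (fun i => cterm_le σ (i+n)) (summable_bound.comp_injective (add_left_injective n))
  constructor
  · rw [hsplit]; linarith
  · rw [hsplit]; linarith

private lemma volume_CD : volume CD = 0 := by
  have key : ∀ n : ℕ, volume CD ≤ ENNReal.ofReal ((2/3:ℝ)^n) := by
    intro n
    calc volume CD ≤ volume (⋃ v : Fin n → Bool, Icc (cpre n v) (cpre n v + (3:ℝ)⁻¹ ^ n)) :=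
          measure_mono (CD_subset_cover n)
      _ ≤ ∑' v : Fin n → Bool, volume (Icc (cpre n v) (cpre n v + (3:ℝ)⁻¹ ^ n)) :=
          measure_iUnion_le _
      _ = ∑' _ : Fin n → Bool, ENNReal.ofReal ((3:ℝ)⁻¹ ^ n) := by
          congr 1; funext v; rw [Real.volume_Icc]; ring_nf
      _ = (Fintype.card (Fin n → Bool)) * ENNReal.ofReal ((3:ℝ)⁻¹ ^ n) := by
          rw [tsum_fintype]; simp [Finset.sum_const, nsmul_eq_mul]
      _ = ENNReal.ofReal ((2/3:ℝ)^n) := by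
          have hcard : (Fintype.card (Fin n → Bool)) = 2^n := by simp
          rw [hcard]
          have h2 : ((2^n : ℕ) : ℝ≥0∞) = ENNReal.ofReal ((2:ℝ)^n) := by
            rw [ENNReal.ofReal_pow (by norm_num)]
            norm_num
          rw [h2, ← ENNReal.ofReal_mul (by positivity)]
          congr 1
          rw [div_pow]
          ring_nf
          rw [one_div]
  have htend : Tendsto (fun n : ℕ => ENNReal.ofReal ((2/3:ℝ)^n)) atTop (nhds 0) := by
    have : Tendsto (fun n : ℕ => (2/3:ℝ)^n) atTop (nhds 0) :=
      tendsto_pow_atTop_nhds_zero_of_lt_one (by norm_num) (by norm_num)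
    simpa using (ENNReal.tendsto_ofReal this)
  have := ge_of_tendsto htend (Eventually.of_forall key)
  simpa using this

private lemma interior_CD : interior CD = ∅ := by
  by_contra h
  obtain ⟨x, hx⟩ := Set.nonempty_iff_ne_empty.mpr h
  obtain ⟨ε, hε, hball⟩ := Metric.isOpen_iff.mp isOpen_interior x hx
  have h1 : volume (Metric.ball x ε) ≤ volume CD :=
    measure_mono (hball.trans interior_subset)
  rw [volume_CD, Real.volume_ball] at h1
  simp at h1
  linarith

/-! ### Countability lemmas -/

private lemma countable_bad (S : Set ℝ) :
    {t | t ∈ S ∧ t ∉ closure (S ∩ Iio t)}.Countable := by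
  set B := {t | t ∈ S ∧ t ∉ closure (S ∩ Iio t)} with hB
  have hq : ∀ t : B, ∃ q : ℚ, (q:ℝ) < (t:ℝ) ∧ ∀ s ∈ S, (q:ℝ) < s → ¬ s < (t:ℝ) := by
    rintro ⟨t, htS, htn⟩
    have : ∃ ε > 0, Metric.ball t ε ∩ (S ∩ Iio t) = ∅ := by
      have : IsOpen (closure (S ∩ Iio t))ᶜ := isClosed_closure.isOpen_compl
      obtain ⟨ε, hε, hball⟩ := Metric.isOpen_iff.mp this t htn
      refine ⟨ε, hε, ?_⟩
      apply eq_empty_of_forall_notMem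
      rintro y ⟨hy1, hy2⟩
      exact hball hy1 (subset_closure hy2)
    obtain ⟨ε, hε, hball⟩ := this
    obtain ⟨q, hq1, hq2⟩ := exists_rat_btwn (show t - ε < t by linarith)
    refine ⟨q, hq2, ?_⟩
    intro s hs hqs hst
    have : s ∈ Metric.ball t ε ∩ (S ∩ Iio t) := by
      constructor
      · rw [Metric.mem_ball, Real.dist_eq, abs_lt]; constructor <;> linarith
      · exact ⟨hs, hst⟩
    rw [hball] at this
    exact this
  choose q hq1 hq2 using hq
  have hinj : Function.Injective q := by
    intro t₁ t₂ heq
    by_contra hne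
    rcases lt_trichotomy (t₁:ℝ) (t₂:ℝ) with h | h | h
    · exact hq2 t₂ t₁ t₁.2.1 (heq ▸ hq1 t₁) h
    · exact hne (Subtype.ext h)
    · exact hq2 t₁ t₂ t₂.2.1 (heq ▸ hq1 t₂) h
  exact Set.countable_coe_iff.mp (hinj.countable)

private lemma countable_localmax {X : Type*} [TopologicalSpace X] [SecondCountableTopology X]
    (g : X → ℝ) : {t | ∃ x, IsLocalMax g x ∧ g x = t}.Countable := by
  obtain ⟨b, hbc, -, hbasis⟩ := TopologicalSpace.exists_countable_basis X
  set T := {t | ∃ x, IsLocalMax g x ∧ g x = t} with hT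
  have hsel : ∀ t : T, ∃ v : Set X, v ∈ b ∧ (∃ x ∈ v, g x = (t:ℝ)) ∧ ∀ y ∈ v, g y ≤ (t:ℝ) := by
    rintro ⟨t, x, hx, rfl⟩
    obtain ⟨u, hu1, hu2, hu3⟩ := eventually_nhds_iff.mp hx
    obtain ⟨v, hvb, hxv, hvu⟩ := hbasis.exists_subset_of_mem_open hu3 hu2
    exact ⟨v, hvb, ⟨x, hxv, rfl⟩, fun y hy => hu1 y (hvu hy)⟩
  choose v hv1 hv2 hv3 using hsel
  have : Countable ↥b := hbc.to_subtype
  have hinj : Function.Injective (fun t : T => (⟨v t, hv1 t⟩ : b)) := by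
    intro t₁ t₂ heq
    have heq' : v t₁ = v t₂ := congrArg Subtype.val heq
    obtain ⟨x₁, hx₁, hg₁⟩ := hv2 t₁
    obtain ⟨x₂, hx₂, hg₂⟩ := hv2 t₂
    have h12 : (t₁:ℝ) ≤ (t₂:ℝ) := hg₁ ▸ hv3 t₂ x₁ (heq' ▸ hx₁)
    have h21 : (t₂:ℝ) ≤ (t₁:ℝ) := hg₂ ▸ hv3 t₁ x₂ (heq'.symm ▸ hx₂)
    exact Subtype.ext (le_antisymm h12 h21)
  exact Set.countable_coe_iff.mp (hinj.countable)

private lemma not_countable_Ioi : ¬ (Set.Ioi (0:ℝ)).Countable := by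
  intro h
  have h2 : (Neg.neg '' Set.Ioi (0:ℝ)).Countable := h.image _
  have hsub : (Set.univ : Set ℝ) ⊆ Set.Ioi 0 ∪ ((Neg.neg '' Set.Ioi 0) ∪ {0}) := by
    intro x _
    rcases lt_trichotomy 0 x with h' | h' | h'
    · exact Or.inl h'
    · exact Or.inr (Or.inr (by simp [h'.symm]))
    · exact Or.inr (Or.inl ⟨-x, by simpa using h', by ring⟩)
  exact Cardinal.not_countable_real
    ((h.union (h2.union (Set.countable_singleton 0))).mono hsub)

/-! ### Segments in the unit interval -/

private def segPt (x y : unitInterval) (s : ℝ) : unitInterval :=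
  ⟨(1 - min 1 (max 0 s)) * (x:ℝ) + min 1 (max 0 s) * (y:ℝ), by
    set s' := min 1 (max 0 s) with hs'
    have h0 : 0 ≤ s' := le_min (by norm_num) (le_max_left 0 s)
    have h1 : s' ≤ 1 := min_le_left _ _
    have hx0 := x.2.1; have hx1 := x.2.2
    have hy0 := y.2.1; have hy1 := y.2.2
    constructor
    · nlinarith
    · nlinarith⟩

private lemma segPt_coe (x y : unitInterval) {s : ℝ} (hs : s ∈ Icc (0:ℝ) 1) :
    (segPt x y s : ℝ) = (1 - s) * (x:ℝ) + s * (y:ℝ) := by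
  have : min 1 (max 0 s) = s := by
    rw [max_eq_right hs.1, min_eq_right hs.2]
  simp only [segPt, this]

private lemma segPt_continuous (x y : unitInterval) : Continuous (segPt x y) := by
  apply Continuous.subtype_mk
  fun_prop

private lemma segPt_dist_left (x y : unitInterval) {s : ℝ} (hs : s ∈ Icc (0:ℝ) 1) :
    dist (segPt x y s) x = s * dist x y := by
  rw [Subtype.dist_eq, Subtype.dist_eq, segPt_coe x y hs, Real.dist_eq, Real.dist_eq]
  rw [show (1 - s) * (x:ℝ) + s * (y:ℝ) - (x:ℝ) = s * ((y:ℝ) - (x:ℝ)) by ring]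
  rw [abs_mul, abs_of_nonneg hs.1, abs_sub_comm]

private lemma segPt_dist_right (x y : unitInterval) {s : ℝ} (hs : s ∈ Icc (0:ℝ) 1) :
    dist (segPt x y s) y = (1 - s) * dist x y := by
  rw [Subtype.dist_eq, Subtype.dist_eq, segPt_coe x y hs, Real.dist_eq, Real.dist_eq]
  rw [show (1 - s) * (x:ℝ) + s * (y:ℝ) - (y:ℝ) = (1 - s) * ((x:ℝ) - (y:ℝ)) by ring]
  rw [abs_mul, abs_of_nonneg (by linarith [hs.2] : (0:ℝ) ≤ 1 - s)]

private lemma seg_ivt (g : unitInterval → ℝ) (hg : Continuous g) (x y : unitInterval) {v : ℝ}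
    (hv : v ∈ Icc (min (g x) (g y)) (max (g x) (g y))) :
    ∃ z : unitInterval, g z = v ∧ dist z x ≤ dist x y := by
  have hcont : ContinuousOn (fun s : ℝ => g (segPt x y s)) (Icc 0 1) :=
    (hg.comp (segPt_continuous x y)).continuousOn
  have h0 : (fun s : ℝ => g (segPt x y s)) 0 = g x := by
    show g _ = g x
    congr 1
    apply Subtype.ext
    rw [segPt_coe x y (by norm_num : (0:ℝ) ∈ Icc (0:ℝ) 1)]; ring
  have h1 : (fun s : ℝ => g (segPt x y s)) 1 = g y := by
    show g _ = g y
    congr 1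
    apply Subtype.ext
    rw [segPt_coe x y (by norm_num : (1:ℝ) ∈ Icc (0:ℝ) 1)]; ring
  have := intermediate_value_uIcc (a := (0:ℝ)) (b := 1) (f := fun s : ℝ => g (segPt x y s)) (by
    rw [uIcc_of_le (by norm_num : (0:ℝ) ≤ 1)]; exact hcont)
  rw [show g (segPt x y 0) = g x from h0, show g (segPt x y 1) = g y from h1] at this
  have hv' : v ∈ uIcc (g x) (g y) := by
    rw [uIcc]; exact ⟨hv.1, hv.2⟩
  obtain ⟨s, hs, hgs⟩ := this hv'
  rw [uIcc_of_le (by norm_num : (0:ℝ) ≤ 1)] at hs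
  refine ⟨segPt x y s, hgs, ?_⟩
  rw [segPt_dist_left x y hs]
  have : s * dist x y ≤ 1 * dist x y :=
    mul_le_mul_of_nonneg_right hs.2 dist_nonneg
  linarith

/-! ### The main construction: enlarging a closed nowhere dense set to a Cantor set -/

private lemma exists_cantor_superset (F : Set unitInterval) (hFc : IsClosed F)
    (hFne : F.Nonempty) (hFint : interior F = ∅) :
    ∃ K : Set unitInterval, F ⊆ K ∧ K.Nonempty ∧ IsClosed K ∧
      (∀ x ∈ K, x ∈ closure (K \ {x})) ∧ interior K = ∅ := by
  classical
  set g : unitInterval → ℝ := fun x => infDist x F with hgdef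
  have hgcont : Continuous g := continuous_infDist_pt F
  have hgnn : ∀ x, 0 ≤ g x := fun x => infDist_nonneg
  have hgF : ∀ x ∈ F, g x = 0 := fun x hx => infDist_zero_of_mem hx
  -- countable sets of "bad" values
  set H := {t : ℝ | ∃ x, IsLocalMax g x ∧ g x = t} with hHdef
  have hHc : H.Countable := countable_localmax g
  set Bad := {t | t ∈ CD ∧ t ∉ closure (CD ∩ Iio t)} with hBaddef
  have hBadc : Bad.Countable := countable_bad CD
  -- choose a scaling constant
  obtain ⟨c, hc0, hcB⟩ : ∃ c : ℝ, 0 < c ∧ c ∉ Set.image2 (· / ·) H Bad := by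
    by_contra hcon
    push_neg at hcon
    exact not_countable_Ioi ((hHc.image2 hBadc _).mono (fun x hx => hcon x hx))
  set D := (fun y : ℝ => c * y) '' CD with hDdef
  have hD0 : (0:ℝ) ∈ D := ⟨0, zero_mem_CD, mul_zero c⟩
  have hDnn : ∀ t ∈ D, (0:ℝ) ≤ t := by
    rintro t ⟨d, hd, rfl⟩
    exact mul_nonneg hc0.le (CD_nonneg d hd)
  have hDcl : IsClosed D := by
    rw [hDdef, show (fun y : ℝ => c * y) = ⇑(Homeomorph.mulLeft₀ c hc0.ne') from rfl,
      Homeomorph.isClosed_image]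
    exact isClosed_CD
  have hDint : interior D = ∅ := by
    rw [hDdef, show (fun y : ℝ => c * y) = ⇑(Homeomorph.mulLeft₀ c hc0.ne') from rfl,
      ← Homeomorph.image_interior, interior_CD, Set.image_empty]
  -- accumulation of D at 0 from the right
  have h0acc : ∀ ε > 0, ∃ t' ∈ D, 0 < t' ∧ t' < ε := by
    intro ε hε
    obtain ⟨s, hsCD, hsne, hsd⟩ := CD_acc 0 zero_mem_CD (ε/c) (by positivity)
    have hs0 : 0 < s := lt_of_le_of_ne (CD_nonneg s hsCD) (Ne.symm hsne)
    refine ⟨c * s, ⟨s, hsCD, rfl⟩, by positivity, ?_⟩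
    have : s < ε / c := by
      have := abs_lt.mp hsd
      linarith [this.2]
    calc c * s < c * (ε / c) := by exact mul_lt_mul_of_pos_left this hc0
      _ = ε := by field_simp
  -- the key dichotomy for positive elements of D
  have hkey : ∀ t ∈ D, 0 < t →
      (∀ ε > 0, ∃ t' ∈ D, 0 ≤ t' ∧ t' < t ∧ t - t' < ε) ∨
      ((∀ ε > 0, ∃ t' ∈ D, t < t' ∧ t' - t < ε) ∧ t ∉ H) := by
    rintro t ⟨d, hdCD, rfl⟩ ht
    have hd0 : 0 < d := by
      rcases lt_or_eq_of_le (CD_nonneg d hdCD) with h | h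
      · exact h
      · exfalso; rw [← h] at ht; simp at ht
    by_cases hbad : d ∈ closure (CD ∩ Iio d)
    · left
      intro ε hε
      rw [Metric.mem_closure_iff] at hbad
      obtain ⟨s, ⟨hsCD, hslt⟩, hdist⟩ := hbad (ε/c) (by positivity)
      refine ⟨c * s, ⟨s, hsCD, rfl⟩, mul_nonneg hc0.le (CD_nonneg s hsCD),
        mul_lt_mul_of_pos_left hslt hc0, ?_⟩
      rw [Real.dist_eq] at hdist
      have h1 : d - s < ε / c := by
        have := abs_lt.mp hdist
        linarith [this.2]
      calc c * d - c * s = c * (d - s) := by ring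
        _ < c * (ε / c) := mul_lt_mul_of_pos_left h1 hc0
        _ = ε := by field_simp
    · right
      constructor
      · intro ε hε
        have hex : ∃ ε₀ > 0, ∀ s ∈ CD ∩ Iio d, ¬ dist d s < ε₀ := by
          by_contra hcon
          push_neg at hcon
          apply hbad
          rw [Metric.mem_closure_iff]
          intro δ hδ
          obtain ⟨s, hs, hds⟩ := hcon δ hδ
          exact ⟨s, hs, hds⟩
        obtain ⟨ε₀, hε₀, hno⟩ := hex
        obtain ⟨s, hsCD, hsne, hsd⟩ := CD_acc d hdCD (min (ε/c) ε₀) (by positivity)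
        have hsgt : d < s := by
          rcases lt_trichotomy s d with h | h | h
          · exfalso
            apply hno s ⟨hsCD, h⟩
            rw [Real.dist_eq, abs_sub_comm]
            exact lt_of_lt_of_le hsd (min_le_right _ _)
          · exact absurd h hsne
          · exact h
        refine ⟨c * s, ⟨s, hsCD, rfl⟩, mul_lt_mul_of_pos_left hsgt hc0, ?_⟩
        have h1 : s - d < ε / c := by
          have h2 := abs_lt.mp (lt_of_lt_of_le hsd (min_le_left _ _))
          linarith [h2.1]
        calc c * s - c * d = c * (s - d) := by ring
          _ < c * (ε / c) := mul_lt_mul_of_pos_left h1 hc0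
          _ = ε := by field_simp
      · intro htH
        refine hcB ?_
        refine ⟨c * d, htH, d, ⟨hdCD, hbad⟩, ?_⟩
        field_simp
  -- define K
  refine ⟨g ⁻¹' D, ?_, ?_, hDcl.preimage hgcont, ?_, ?_⟩
  · intro x hx
    simp only [Set.mem_preimage, hgF x hx]
    exact hD0
  · obtain ⟨x, hx⟩ := hFne
    exact ⟨x, by simp only [Set.mem_preimage, hgF x hx]; exact hD0⟩
  · -- no isolated points
    intro x hx
    rw [Metric.mem_closure_iff]
    intro ε hε
    have hxD : g x ∈ D := hx
    rcases eq_or_lt_of_le (hgnn x) with ht0 | htpos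
    · -- g x = 0 : find a nearby point with positive distance to F
      have hyex : ∃ y : unitInterval, dist x y < ε ∧ 0 < g y := by
        by_contra hcon
        push_neg at hcon
        have hsub : Metric.ball x ε ⊆ F := by
          intro y hy
          have hy' : dist x y < ε := by
            rw [Metric.mem_ball] at hy; rwa [dist_comm] at hy
          rcases (hcon y hy').lt_or_eq with h | h
          · exact absurd h (not_lt.mpr (hgnn y))
          · exact (hFc.mem_iff_infDist_zero hFne).mpr h
        have : x ∈ interior F :=
          interior_maximal hsub Metric.isOpen_ball (Metric.mem_ball_self hε)
        rw [hFint] at this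
        exact this
      obtain ⟨y, hxy, hgy⟩ := hyex
      obtain ⟨t', ht'D, ht'0, ht'lt⟩ := h0acc (g y) hgy
      have hv : t' ∈ Icc (min (g x) (g y)) (max (g x) (g y)) := by
        constructor
        · exact le_trans (min_le_left _ _) (by rw [← ht0]; exact ht'0.le)
        · exact le_trans ht'lt.le (le_max_right _ _)
      obtain ⟨z, hgz, hzx⟩ := seg_ivt g hgcont x y hv
      refine ⟨z, ⟨by rw [Set.mem_preimage, hgz]; exact ht'D, ?_⟩, ?_⟩
      · intro hzx'
        rw [Set.mem_singleton_iff] at hzx'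
        rw [hzx'] at hgz
        rw [← hgz, ← ht0] at ht'0
        exact lt_irrefl _ ht'0
      · rw [dist_comm]
        exact lt_of_le_of_lt hzx hxy
    · -- g x = t > 0
      set t := g x with htdef
      rcases hkey t hxD htpos with hleft | ⟨hright, htH⟩
      · -- approximated from the left: walk towards the nearest point of F
        obtain ⟨t', ht'D, ht'0, ht'lt, ht'close⟩ := hleft (min ε t) (by positivity)
        obtain ⟨p, hpF, hpd⟩ := (hFc.isCompact.exists_infDist_eq_dist hFne x)
        have hpd' : dist x p = t := hpd.symm
        set s := (t - t') / t with hsdef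
        have hs : s ∈ Icc (0:ℝ) 1 := by
          constructor
          · apply div_nonneg (by linarith) htpos.le
          · rw [div_le_one htpos]; linarith
        set z := segPt x p s with hzdef
        have hst : s * t = t - t' := by
          rw [hsdef]; field_simp
        have hzx : dist z x = t - t' := by
          rw [hzdef, segPt_dist_left x p hs, hpd', hst]
        have hzp : dist z p = t' := by
          rw [hzdef, segPt_dist_right x p hs, hpd', sub_mul, one_mul, hst]
          ring
        have hgz : g z = t' := by
          have h1 : g z ≤ t' := by
            rw [← hzp]
            exact infDist_le_dist_of_mem hpF
          have h2 : t' ≤ g z := by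
            have h := infDist_le_infDist_add_dist (x := x) (y := z) (s := F)
            have hgx' : g x = infDist x F := rfl
            have hgz' : g z = infDist z F := rfl
            rw [← hgx', ← hgz', dist_comm x z, hzx, ← htdef] at h
            linarith
          linarith
        refine ⟨z, ⟨by rw [Set.mem_preimage, hgz]; exact ht'D, ?_⟩, ?_⟩
        · intro hzx'
          rw [Set.mem_singleton_iff] at hzx'
          rw [hzx'] at hgz
          rw [← htdef] at hgz
          linarith
        · rw [dist_comm, hzx]
          exact lt_of_lt_of_le ht'close (min_le_left _ _)
      · -- approximated from the right: x is not a local max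
        have hnotmax : ¬ IsLocalMax g x := by
          intro hmax
          exact htH ⟨x, hmax, rfl⟩
        have hyex : ∃ y : unitInterval, dist x y < ε ∧ t < g y := by
          by_contra hcon
          push_neg at hcon
          apply hnotmax
          apply Metric.eventually_nhds_iff_ball.mpr
          refine ⟨ε, hε, fun y hy => hcon y ?_⟩
          rw [Metric.mem_ball] at hy
          rwa [dist_comm] at hy
        obtain ⟨y, hxy, hgy⟩ := hyex
        obtain ⟨t', ht'D, ht'gt, ht'close⟩ := hright (g y - t) (by linarith)
        have hv : t' ∈ Icc (min (g x) (g y)) (max (g x) (g y)) := by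
          constructor
          · exact le_trans (min_le_left _ _) (by rw [← htdef]; linarith)
          · exact le_trans (by linarith : t' ≤ g y) (le_max_right _ _)
        obtain ⟨z, hgz, hzx⟩ := seg_ivt g hgcont x y hv
        refine ⟨z, ⟨by rw [Set.mem_preimage, hgz]; exact ht'D, ?_⟩, ?_⟩
        · intro hzx'
          rw [Set.mem_singleton_iff] at hzx'
          rw [hzx'] at hgz
          rw [← htdef] at hgz
          linarith
        · rw [dist_comm]
          exact lt_of_le_of_lt hzx hxy
  · -- empty interior
    by_contra hint
    obtain ⟨x₀, hx₀⟩ := Set.nonempty_iff_ne_empty.mpr hint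
    have hexnF : ∃ x ∈ interior (g ⁻¹' D), x ∉ F := by
      by_contra hcon
      push_neg at hcon
      have : interior (g ⁻¹' D) ⊆ interior F :=
        interior_maximal hcon isOpen_interior
      rw [hFint] at this
      exact this hx₀
    obtain ⟨x, hxint, hxF⟩ := hexnF
    have htpos : 0 < g x := (hFc.notMem_iff_infDist_pos hFne).mp hxF
    set t := g x with htdef
    obtain ⟨ε₁, hε₁, hball⟩ := Metric.isOpen_iff.mp isOpen_interior x hxint
    set ε := min ε₁ t with hεdef
    have hε : 0 < ε := lt_min hε₁ htpos
    -- g is constant equal to t on the ball of radius ε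
    have hconst : ∀ y : unitInterval, dist x y < ε → g y = t := by
      intro y hy
      by_contra hne
      have hyK : ∀ v ∈ Icc (min (g x) (g y)) (max (g x) (g y)), v ∈ D := by
        intro v hv
        obtain ⟨z, hgz, hzx⟩ := seg_ivt g hgcont x y hv
        have hzball : z ∈ Metric.ball x ε₁ := by
          rw [Metric.mem_ball]
          calc dist z x ≤ dist x y := hzx
            _ < ε := hy
            _ ≤ ε₁ := min_le_left _ _
        have : z ∈ interior (g ⁻¹' D) := hball hzball
        have : z ∈ g ⁻¹' D := interior_subset this
        rw [Set.mem_preimage, hgz] at this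
        exact this
      have hlt : min (g x) (g y) < max (g x) (g y) := by
        rcases lt_or_gt_of_ne hne with h | h
        · rw [min_eq_right h.le, max_eq_left h.le]
          exact h
        · rw [min_eq_left h.le, max_eq_right h.le]
          exact h
      have hIoo : Ioo (min (g x) (g y)) (max (g x) (g y)) ⊆ interior D :=
        interior_maximal (fun v hv => hyK v ⟨hv.1.le, hv.2.le⟩) isOpen_Ioo
      rw [hDint] at hIoo
      obtain ⟨w, hw⟩ := nonempty_Ioo.mpr hlt
      exact hIoo hw
    -- walk toward the nearest point: contradiction
    obtain ⟨p, hpF, hpd⟩ := (hFc.isCompact.exists_infDist_eq_dist hFne x)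
    have hpd' : dist x p = t := hpd.symm
    set s := (ε/2) / t with hsdef
    have hs : s ∈ Icc (0:ℝ) 1 := by
      constructor
      · positivity
      · rw [div_le_one htpos]
        have : ε ≤ t := min_le_right _ _
        linarith
    set z := segPt x p s with hzdef
    have hst : s * t = ε/2 := by
      rw [hsdef]; field_simp
    have hzx : dist z x = ε/2 := by
      rw [hzdef, segPt_dist_left x p hs, hpd', hst]
    have hzp : dist z p = t - ε/2 := by
      rw [hzdef, segPt_dist_right x p hs, hpd', sub_mul, one_mul, hst]
    have hgz : g z ≤ t - ε/2 := by
      rw [← hzp]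
      exact infDist_le_dist_of_mem hpF
    have := hconst z (by rw [dist_comm, hzx]; linarith)
    linarith

end
end CantorAux

/-- If `[0,1]` can be covered by `κ < 𝔠` closed nowhere dense sets, then it can
be covered by `κ` Cantor sets (nonempty closed sets without isolated points and
with empty interior) such that every two points lie together in one of them. -/
theorem cover_by_cantor_sets (κ : Cardinal) (hκ : κ < Cardinal.continuum)
    (hcov : ∃ G : Set (Set unitInterval), #G ≤ κ ∧
        (∀ s ∈ G, IsClosed s ∧ IsNowhereDense s) ∧ ⋃₀ G = Set.univ) :
    ∃ C : Set (Set unitInterval), #C ≤ κ ∧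
      (∀ s ∈ C, s.Nonempty ∧ IsClosed s ∧
        (∀ x ∈ s, x ∈ closure (s \ {x})) ∧ interior s = ∅) ∧
      ∀ x y : unitInterval, ∃ s ∈ C, x ∈ s ∧ y ∈ s := by
  classical
  obtain ⟨G, hGcard, hGprop, hGcover⟩ := hcov
  -- κ must be infinite, by the Baire category theorem
  have hκinf : Cardinal.aleph0 ≤ κ := by
    by_contra hfin
    push_neg at hfin
    have hGfin : G.Finite := by
      rw [← Cardinal.lt_aleph0_iff_set_finite]
      exact lt_of_le_of_lt hGcard hfin
    have : Countable ↥G := hGfin.countable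
    have hU : (⋃ s : G, (s : Set unitInterval)) = Set.univ := by
      rw [← Set.sUnion_eq_iUnion]
      exact hGcover
    obtain ⟨s, hs⟩ := nonempty_interior_of_iUnion_of_closed
      (fun s : G => (hGprop s s.2).1) hU
    have : interior (s : Set unitInterval) = ∅ :=
      ((hGprop s s.2).1.isNowhereDense_iff).mp (hGprop s s.2).2
    rw [this] at hs
    exact Set.not_nonempty_empty hs
  -- union of two closed nowhere dense sets is nowhere dense
  have hunion : ∀ a ∈ G, ∀ b ∈ G, IsClosed (a ∪ b) ∧ interior (a ∪ b) = ∅ := by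
    intro a ha b hb
    have hac := (hGprop a ha).1
    have hbc := (hGprop b hb).1
    have hai : interior a = ∅ := (hac.isNowhereDense_iff).mp (hGprop a ha).2
    have hbi : interior b = ∅ := (hbc.isNowhereDense_iff).mp (hGprop b hb).2
    refine ⟨hac.union hbc, ?_⟩
    rw [Set.eq_empty_iff_forall_notMem]
    intro x hx
    by_cases hxa : x ∈ interior (a ∪ b) \ a
    · have hopen : IsOpen (interior (a ∪ b) \ a) := isOpen_interior.sdiff hac
      have hsub : interior (a ∪ b) \ a ⊆ b := by
        intro y hy
        rcases interior_subset hy.1 with h | h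
        · exact absurd h hy.2
        · exact h
      have : x ∈ interior b := interior_maximal hsub hopen hxa
      rw [hbi] at this
      exact this
    · have hxa' : x ∈ a := by
        by_contra h
        exact hxa ⟨hx, h⟩
      -- x ∈ a; but then a neighbourhood: interior (a∪b) \ b ⊆ a similarly, or directly:
      have hopen : IsOpen (interior (a ∪ b) \ b) := isOpen_interior.sdiff hbc
      by_cases hxb : x ∈ interior (a ∪ b) \ b
      · have hsub : interior (a ∪ b) \ b ⊆ a := by
          intro y hy
          rcases interior_subset hy.1 with h | h
          · exact h
          · exact absurd h hy.2
        have : x ∈ interior a := interior_maximal hsub hopen hxb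
        rw [hai] at this
        exact this
      · have hxb' : x ∈ b := by
          by_contra h
          exact hxb ⟨hx, h⟩
        -- x ∈ a ∩ b : consider interior (a∪b) \ a again... x ∈ a so use closure argument
        -- Use: interior (a ∪ b) ⊆ closure (interior (a∪b) \ a) ∪ a ... simpler:
        -- every nonempty open subset of interior (a∪b) meets (a∪b)ᶜ? Instead:
        -- interior (a∪b)\a is open and ⊆ b so empty; hence interior (a∪b) ⊆ a,
        -- hence interior (a∪b) ⊆ interior a = ∅.
        have hempty : interior (a ∪ b) \ a = ∅ := by
          rw [Set.eq_empty_iff_forall_notMem]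
          intro y hy
          have hsub : interior (a ∪ b) \ a ⊆ b := by
            intro z hz
            rcases interior_subset hz.1 with h | h
            · exact absurd h hz.2
            · exact h
          have hopen2 : IsOpen (interior (a ∪ b) \ a) := isOpen_interior.sdiff hac
          have : y ∈ interior b := interior_maximal hsub hopen2 hy
          rw [hbi] at this
          exact this
        have : interior (a ∪ b) ⊆ a := by
          intro y hy
          by_contra h
          rw [Set.eq_empty_iff_forall_notMem] at hempty
          exact hempty y ⟨hy, h⟩
        have : x ∈ interior a := interior_maximal this isOpen_interior hx
        rw [hai] at this
        exact this
  -- the Cantor-superset choice function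
  have hcant : ∀ F : Set unitInterval,
      ∃ K : Set unitInterval, (IsClosed F ∧ F.Nonempty ∧ interior F = ∅) →
        (F ⊆ K ∧ K.Nonempty ∧ IsClosed K ∧
          (∀ x ∈ K, x ∈ closure (K \ {x})) ∧ interior K = ∅) := by
    intro F
    by_cases h : IsClosed F ∧ F.Nonempty ∧ interior F = ∅
    · obtain ⟨K, hK⟩ := exists_cantor_superset F h.1 h.2.1 h.2.2
      exact ⟨K, fun _ => hK⟩
    · exact ⟨∅, fun h' => absurd h' h⟩
  choose cant hcantspec using hcant
  set G' := {s | s ∈ G ∧ s.Nonempty} with hG'def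
  refine ⟨Set.image2 (fun s t => cant (s ∪ t)) G' G', ?_, ?_, ?_⟩
  · -- cardinality
    have h1 : #(Set.image2 (fun s t : Set unitInterval => cant (s ∪ t)) G' G') ≤ #G' * #G' :=
      Cardinal.mk_image2_le
    have h2 : #G' ≤ κ := le_trans (Cardinal.mk_le_mk_of_subset (fun s hs => hs.1)) hGcard
    calc #(Set.image2 (fun s t : Set unitInterval => cant (s ∪ t)) G' G')
        ≤ #G' * #G' := h1
      _ ≤ κ * κ := mul_le_mul' h2 h2
      _ = κ := Cardinal.mul_eq_self hκinf
  · -- every member is a Cantor set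
    intro K hK
    rw [Set.mem_image2] at hK
    obtain ⟨a, ha, b, hb, rfl⟩ := hK
    have hcond : IsClosed (a ∪ b) ∧ (a ∪ b).Nonempty ∧ interior (a ∪ b) = ∅ :=
      ⟨(hunion a ha.1 b hb.1).1, ha.2.mono Set.subset_union_left, (hunion a ha.1 b hb.1).2⟩
    obtain ⟨-, h2, h3, h4, h5⟩ := hcantspec (a ∪ b) hcond
    exact ⟨h2, h3, h4, h5⟩
  · -- two points always lie in a common set
    intro x y
    have hx : x ∈ ⋃₀ G := by rw [hGcover]; trivial
    have hy : y ∈ ⋃₀ G := by rw [hGcover]; trivial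
    obtain ⟨a, ha, hxa⟩ := hx
    obtain ⟨b, hb, hyb⟩ := hy
    have ha' : a ∈ G' := ⟨ha, ⟨x, hxa⟩⟩
    have hb' : b ∈ G' := ⟨hb, ⟨y, hyb⟩⟩
    have hcond : IsClosed (a ∪ b) ∧ (a ∪ b).Nonempty ∧ interior (a ∪ b) = ∅ :=
      ⟨(hunion a ha b hb).1, ⟨x, Or.inl hxa⟩, (hunion a ha b hb).2⟩
    obtain ⟨hsub, -, -, -, -⟩ := hcantspec (a ∪ b) hcond
    exact ⟨cant (a ∪ b), Set.mem_image2_of_mem ha' hb',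
      hsub (Or.inl hxa), hsub (Or.inr hyb)⟩
end
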